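/- arXiv:0802.1192 — 9 statements merged into one kernel-verified Lean document; each statement's English description precedes it below -/
import Mathlib

section
/- Let β > α > 0 and define π_{α,β} = β^α / (β^α + Γ(α,β)(β−α)e^β). Let Z be a random variable whose law is the mixture (1−π_{α,β}) F_{α,β} + π_{α,β} δ_1, where F_{α,β} is the distribution function of the incomplete gamma distribution IG(α,β,1) and δ_1 is the point mass at 1. Then for every integer m ≥ 0, E[Z^{m+1}] = ((m+α)/β) E[Z^m] − (m/β) π_{α,β}. -/
open MeasureTheory Real Filter Finset

section aux

lemma aux_cont {c : ℝ} (hc : 0 ≤ c) {d : ℝ} :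
    Continuous (fun x : ℝ => x ^ c * Real.exp (-(d * x))) :=
  (Real.continuous_rpow_const hc).mul
    (Real.continuous_exp.comp (continuous_const.mul continuous_id).neg)

lemma aux_contOn {c : ℝ} {d : ℝ} {s : Set ℝ} (hs : ∀ x ∈ s, x ≠ 0) :
    ContinuousOn (fun x : ℝ => x ^ c * Real.exp (-(d * x))) s := by
  intro x hx
  exact (((Real.continuousAt_rpow_const x c (Or.inl (hs x hx))).mul
    (Real.continuous_exp.continuousAt.comp
      ((continuous_const.mul continuous_id).neg.continuousAt))).continuousWithinAt)

lemma aux_intInt {c d t : ℝ} (hc : -1 < c) (hd : 0 ≤ d) (ht : 0 ≤ t) :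
    IntervalIntegrable (fun x => x ^ c * Real.exp (-(d * x))) volume 0 t := by
  apply (intervalIntegral.intervalIntegrable_rpow' hc (a := 0) (b := t)).mono_fun
  · exact (aux_contOn (s := Set.uIoc 0 t) (fun x hx => by
      rw [Set.uIoc_of_le ht] at hx; exact hx.1.ne')).aestronglyMeasurable measurableSet_uIoc
  · filter_upwards [ae_restrict_mem measurableSet_uIoc] with x hx
    rw [Set.uIoc_of_le ht] at hx
    have hx0 : 0 < x := hx.1
    rw [Real.norm_eq_abs, Real.norm_eq_abs, abs_mul, Real.abs_exp,
      abs_of_nonneg (Real.rpow_nonneg hx0.le c)]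
    have : Real.exp (-(d * x)) ≤ 1 := by
      rw [Real.exp_le_one_iff]; nlinarith
    nlinarith [Real.rpow_nonneg hx0.le c, Real.exp_pos (-(d*x))]

end aux

/-- Lower incomplete gamma function `Γ(a,b) = ∫_0^b s^(a-1) e^(-s) ds`. -/
noncomputable def lGamma (a b : ℝ) : ℝ := ∫ s in (0:ℝ)..b, s ^ (a - 1) * Real.exp (-s)

lemma lGamma_pos {a b : ℝ} (ha : 0 < a) (hb : 0 < b) : 0 < lGamma a b := by
  have heq : (fun s : ℝ => s ^ (a-1) * Real.exp (-s))
      = fun s => s ^ (a-1) * Real.exp (-(1*s)) := by funext s; rw [one_mul]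
  rw [lGamma, heq]
  apply intervalIntegral.intervalIntegral_pos_of_pos_on
    (aux_intInt (by linarith) zero_le_one hb.le)
  · intro x hx
    exact mul_pos (Real.rpow_pos_of_pos hx.1 _) (Real.exp_pos _)
  · exact hb

lemma aux_ibp {a b : ℝ} (ha : 0 < a) (hb : 0 < b) (k : ℕ) :
    ((k : ℝ) + a) * (∫ x in (0:ℝ)..1, x ^ ((k:ℝ) + a - 1) * Real.exp (-(b*x)))
      - b * (∫ x in (0:ℝ)..1, x ^ ((k:ℝ) + a) * Real.exp (-(b*x))) = Real.exp (-b) := by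
  set c : ℝ := (k : ℝ) + a with hc
  have hc0 : 0 < c := by positivity
  have h1 : IntervalIntegrable (fun x => x ^ (c-1) * Real.exp (-(b*x))) volume 0 1 :=
    aux_intInt (by linarith) hb.le zero_le_one
  have h2 : IntervalIntegrable (fun x => x ^ c * Real.exp (-(b*x))) volume 0 1 :=
    aux_intInt (by linarith) hb.le zero_le_one
  have key : (∫ x in (0:ℝ)..1,
      (c * (x ^ (c-1) * Real.exp (-(b*x))) - b * (x ^ c * Real.exp (-(b*x)))))
      = (fun x : ℝ => x ^ c * Real.exp (-(b*x))) 1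
        - (fun x : ℝ => x ^ c * Real.exp (-(b*x))) 0 := by
    apply intervalIntegral.integral_eq_sub_of_hasDerivAt_of_le
      (f := fun x => x ^ c * Real.exp (-(b*x)))
      (f' := fun x => c * (x ^ (c-1) * Real.exp (-(b*x))) - b * (x ^ c * Real.exp (-(b*x))))
      zero_le_one
    · exact (aux_cont hc0.le).continuousOn
    · intro x hx
      have hx0 : x ≠ 0 := hx.1.ne'
      have hd1 : HasDerivAt (fun y : ℝ => y ^ c) (c * x ^ (c-1)) x :=
        Real.hasDerivAt_rpow_const (Or.inl hx0)
      have hd2 : HasDerivAt (fun y : ℝ => Real.exp (-(b*y))) (Real.exp (-(b*x)) * (-b)) x := by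
        have : HasDerivAt (fun y : ℝ => -(b*y)) (-b) x := by
          simpa using ((hasDerivAt_id' x).const_mul b).fun_neg
        exact (Real.hasDerivAt_exp _).comp x this
      have := hd1.fun_mul hd2
      exact this.congr_deriv (by ring)
    · exact (h1.const_mul c).sub (h2.const_mul b)
  rw [intervalIntegral.integral_sub (h1.const_mul c) (h2.const_mul b),
    intervalIntegral.integral_const_mul, intervalIntegral.integral_const_mul] at key
  simp only [Real.one_rpow, Real.zero_rpow hc0.ne', one_mul, zero_mul, mul_zero, sub_zero] at key
  rw [mul_one] at key
  exact key

/-- The incomplete gamma distribution `IG(a,b,1)` with density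
`Γ(a,b)⁻¹ b^a x^(a-1) e^(-bx)` on `(0,1)`. -/
noncomputable def igMeasure (a b : ℝ) : Measure ℝ :=
  (volume.restrict (Set.Ioo (0:ℝ) 1)).withDensity
    (fun x => ENNReal.ofReal ((lGamma a b)⁻¹ * b ^ a * x ^ (a - 1) * Real.exp (-(b * x))))

/-- The boundary atom mass `π_{a,b} = b^a / (b^a + Γ(a,b)(b-a)e^b)`. -/
noncomputable def ligPi (a b : ℝ) : ℝ :=
  b ^ a / (b ^ a + lGamma a b * (b - a) * Real.exp b)

/-- The Langmuir-incomplete gamma distribution `LIG(a,b)`: the mixture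
`(1-π_{a,b}) IG(a,b,1) + π_{a,b} δ_1`. -/
noncomputable def ligMeasure (a b : ℝ) : Measure ℝ :=
  ENNReal.ofReal (1 - ligPi a b) • igMeasure a b +
    ENNReal.ofReal (ligPi a b) • Measure.dirac 1

section moment
variable {a b : ℝ}

lemma rho_meas (a b : ℝ) : Measurable (fun x : ℝ =>
    ((lGamma a b)⁻¹ * b ^ a * x ^ (a - 1) * Real.exp (-(b * x))).toNNReal) := by
  fun_prop

lemma rho_eq (ha : 0 < a) (hb : 0 < b) (k : ℕ) {x : ℝ} (hx : x ∈ Set.Ioo (0:ℝ) 1) :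
    (((lGamma a b)⁻¹ * b ^ a * x ^ (a - 1) * Real.exp (-(b * x))).toNNReal : NNReal)
      • (x ^ k : ℝ)
    = (lGamma a b)⁻¹ * b ^ a * (x ^ ((k:ℝ) + a - 1) * Real.exp (-(b * x))) := by
  have hx0 : 0 < x := hx.1
  have hρ : 0 ≤ (lGamma a b)⁻¹ * b ^ a * x ^ (a - 1) * Real.exp (-(b * x)) := by
    have := (lGamma_pos ha hb).le
    positivity
  rw [NNReal.smul_def, smul_eq_mul, Real.coe_toNNReal _ hρ]
  rw [show (k:ℝ) + a - 1 = (k:ℝ) + (a - 1) by ring, Real.rpow_add hx0,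
    Real.rpow_natCast]
  ring

lemma ig_moment (ha : 0 < a) (hb : 0 < b) (k : ℕ) :
    ∫ x, (x : ℝ) ^ k ∂(igMeasure a b)
      = (lGamma a b)⁻¹ * b ^ a
        * ∫ x in (0:ℝ)..1, x ^ ((k:ℝ) + a - 1) * Real.exp (-(b * x)) := by
  rw [igMeasure]
  simp only [ENNReal.ofReal]
  rw [integral_withDensity_eq_integral_smul (rho_meas a b)]
  rw [setIntegral_congr_fun measurableSet_Ioo (fun x hx => rho_eq ha hb k hx)]
  rw [MeasureTheory.integral_const_mul, intervalIntegral.integral_of_le zero_le_one,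
    MeasureTheory.integral_Ioc_eq_integral_Ioo]

lemma ig_integrable (ha : 0 < a) (hb : 0 < b) (k : ℕ) :
    Integrable (fun x : ℝ => x ^ k) (igMeasure a b) := by
  rw [igMeasure]
  simp only [ENNReal.ofReal]
  apply (integrable_withDensity_iff_integrable_smul (rho_meas a b)).mpr
  have hI : IntegrableOn (fun x : ℝ =>
      (lGamma a b)⁻¹ * b ^ a * (x ^ ((k:ℝ) + a - 1) * Real.exp (-(b * x))))
      (Set.Ioo 0 1) volume := by
    apply IntegrableOn.mono_set _ Set.Ioo_subset_Ioc_self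
    exact ((intervalIntegrable_iff_integrableOn_Ioc_of_le zero_le_one).mp
      (aux_intInt (by linarith) hb.le zero_le_one)).const_mul _
  exact hI.congr_fun (fun x hx => (rho_eq ha hb k hx).symm) measurableSet_Ioo

lemma lig_moment (ha : 0 < a) (hb : 0 < b) (hπ0 : 0 ≤ ligPi a b) (hπ1 : ligPi a b ≤ 1)
    (k : ℕ) :
    ∫ x, (x : ℝ) ^ k ∂(ligMeasure a b)
      = (1 - ligPi a b) * ((lGamma a b)⁻¹ * b ^ a
          * ∫ x in (0:ℝ)..1, x ^ ((k:ℝ) + a - 1) * Real.exp (-(b * x))) + ligPi a b := by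
  have hdint : Integrable (fun x : ℝ => x ^ k) (Measure.dirac 1) := by
    refine ⟨(continuous_pow k).aestronglyMeasurable, ?_⟩
    simp [HasFiniteIntegral, lintegral_dirac]
  rw [ligMeasure, integral_add_measure
      (((ig_integrable ha hb k)).smul_measure ENNReal.ofReal_ne_top)
      (hdint.smul_measure ENNReal.ofReal_ne_top),
    integral_smul_measure, integral_smul_measure,
    ENNReal.toReal_ofReal (by linarith), ENNReal.toReal_ofReal hπ0,
    integral_dirac, ig_moment ha hb k, one_pow, smul_eq_mul, smul_eq_mul, mul_one]

end moment

/-- Moment recursion for the Langmuir-incomplete gamma distribution: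
`E[Z^{m+1}] = ((m+α)/β) E[Z^m] - (m/β) π_{α,β}`. -/
theorem lig_moment_recursion (α β : ℝ) (hα : 0 < α) (hαβ : α < β) (m : ℕ) :
    ∫ x, x ^ (m + 1) ∂(ligMeasure α β) =
      ((m + α) / β) * (∫ x, x ^ m ∂(ligMeasure α β)) - (m / β) * ligPi α β := by
  have hb : 0 < β := hα.trans hαβ
  have hG : 0 < lGamma α β := lGamma_pos hα hb
  have hba : 0 < β ^ α := Real.rpow_pos_of_pos hb α
  have hD : 0 < β ^ α + lGamma α β * (β - α) * Real.exp β := by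
    have h1 : 0 < lGamma α β * (β - α) * Real.exp β :=
      mul_pos (mul_pos hG (by linarith)) (Real.exp_pos β)
    linarith
  have hπ0 : 0 ≤ ligPi α β := div_nonneg hba.le hD.le
  have hπ1 : ligPi α β ≤ 1 := by
    rw [ligPi, div_le_one hD]
    nlinarith [mul_pos (mul_pos hG (by linarith : (0:ℝ) < β - α)) (Real.exp_pos β)]
  have hcast : ((m + 1 : ℕ) : ℝ) + α - 1 = (m : ℝ) + α := by push_cast; ring
  have hm1 := lig_moment hα hb hπ0 hπ1 (m + 1)
  rw [hcast] at hm1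
  have hm0 := lig_moment hα hb hπ0 hπ1 m
  have hIBP := aux_ibp hα hb m
  set P := ligPi α β with hPdef
  set c : ℝ := (lGamma α β)⁻¹ * β ^ α with hcdef
  set I0 : ℝ := ∫ x in (0:ℝ)..1, x ^ ((m:ℝ) + α - 1) * Real.exp (-(β*x)) with hI0
  set I1 : ℝ := ∫ x in (0:ℝ)..1, x ^ ((m:ℝ) + α) * Real.exp (-(β*x)) with hI1
  have hkey : (1 - P) * c * Real.exp (-β) = (β - α) * P := by
    rw [hPdef, ligPi, hcdef, Real.exp_neg]
    field_simp
    ring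
  rw [hm1, hm0]
  have hβ : (β:ℝ) ≠ 0 := ne_of_gt hb
  field_simp
  linear_combination (-(1 - P) * c) * hIBP - hkey
end

section
/- For α, β > 0, lim_{N→∞} N^{-α} Σ_{k=0}^{N} (Γ(α+k)/k!) (1 − β/N)^k = ∫_0^1 x^{α-1} e^{-βx} dx = β^{-α} Γ(α,β). -/
open MeasureTheory Real Filter Finset
open scoped Nat

lemma aux_fact_le (k d : ℕ) : (k + d)! ≤ k ! * (k + d) ^ d := by
  induction d with
  | zero => simp
  | succ d ih =>
    have h1 : (k + (d+1))! = (k + d + 1) * (k + d)! := by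
      rw [← Nat.add_assoc, Nat.factorial_succ]
    rw [h1]
    calc (k + d + 1) * (k + d)! ≤ (k + d + 1) * (k ! * (k + d) ^ d) :=
          Nat.mul_le_mul_left _ ih
      _ ≤ (k + d + 1) * (k ! * (k + d + 1) ^ d) := by
          exact Nat.mul_le_mul_left _ (Nat.mul_le_mul_left _ (Nat.pow_le_pow_left (by omega) d))
      _ = k ! * (k + (d+1)) ^ (d+1) := by ring_nf
  
lemma aux_fact_ge (k j : ℕ) : k ! * k ^ j ≤ (k + j)! := by
  induction j with
  | zero => simp
  | succ j ih =>
    have h1 : (k + (j+1))! = (k + j + 1) * (k + j)! := by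
      rw [← Nat.add_assoc, Nat.factorial_succ]
    rw [h1, pow_succ]
    calc k ! * (k ^ j * k) = k * (k ! * k ^ j) := by ring
      _ ≤ (k + j + 1) * (k + j)! := Nat.mul_le_mul (by omega) ih

lemma aux_stirling (n : ℕ) : (n : ℝ) ^ n ≤ (n ! : ℝ) * Real.exp n := by
  have h1 : (n : ℝ) ^ n / n ! ≤ ∑ i ∈ range (n + 1), (n : ℝ) ^ i / i ! :=
    Finset.single_le_sum (f := fun i => (n : ℝ) ^ i / i !)
      (fun i _ => by positivity) (self_mem_range_succ n)
  have h2 := Real.sum_le_exp_of_nonneg (x := (n : ℝ)) (Nat.cast_nonneg n) (n + 1)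
  have h3 : (0 : ℝ) < n ! := by positivity
  have h4 : (n : ℝ) ^ n / n ! ≤ Real.exp n := h1.trans h2
  rw [div_le_iff₀ h3] at h4
  linarith [h4]


lemma aux_hasSum_exp (x : ℝ) : HasSum (fun n => x ^ n / n !) (Real.exp x) := by
  rw [Real.exp_eq_exp_ℝ]
  exact NormedSpace.expSeries_div_hasSum_exp x

lemma aux_q_lt_one {s : ℝ} (hs : 0 < s) (hs1 : s ≠ 1) : s * Real.exp (1 - s) < 1 := by
  have h1 : Real.log s < s - 1 := Real.log_lt_sub_one_of_pos hs hs1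
  have h2 : s < Real.exp (s - 1) := by
    calc s = Real.exp (Real.log s) := (Real.exp_log hs).symm
      _ < Real.exp (s - 1) := Real.exp_lt_exp.mpr h1
  calc s * Real.exp (1 - s) < Real.exp (s - 1) * Real.exp (1 - s) :=
        mul_lt_mul_of_pos_right h2 (Real.exp_pos _)
    _ = 1 := by rw [← Real.exp_add]; norm_num

/-- Tail bound for exp: `exp x ≤ ∑_{k≤N} x^k/k! + x^(N+1)/(N+1)! * (1-s)⁻¹`
when `0 ≤ x ≤ (N+1) * s` and `0 ≤ s < 1`. -/
lemma aux_exp_tail {x s : ℝ} (hx : 0 ≤ x) (hs0 : 0 ≤ s) (hs : s < 1) (N : ℕ)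
    (hxs : x ≤ (N + 1) * s) :
    Real.exp x ≤ ∑ k ∈ range (N + 1), x ^ k / k ! + x ^ (N + 1) / (N + 1)! * (1 - s)⁻¹ := by
  refine le_of_tendsto (aux_hasSum_exp x).tendsto_sum_nat (Eventually.of_forall fun M => ?_)
  rcases le_or_gt M (N + 1) with hM | hM
  · have h1 : ∑ k ∈ range M, x ^ k / k ! ≤ ∑ k ∈ range (N + 1), x ^ k / k ! :=
      Finset.sum_le_sum_of_subset_of_nonneg (Finset.range_subset_range.mpr hM)
        (fun i _ _ => by positivity)
    have h2 : (0:ℝ) ≤ x ^ (N + 1) / (N + 1)! * (1 - s)⁻¹ := by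
      have : (0:ℝ) < 1 - s := by linarith
      positivity
    linarith
  · have hsplit : ∑ k ∈ range M, x ^ k / k ! =
        ∑ k ∈ range (N + 1), x ^ k / k ! + ∑ k ∈ Finset.Ico (N + 1) M, x ^ k / k ! := by
      rw [Finset.range_eq_Ico, Finset.range_eq_Ico]
      exact (Finset.sum_Ico_consecutive (fun k => x ^ k / k !) (Nat.zero_le _) hM.le).symm
    rw [hsplit]
    have htail : ∑ k ∈ Finset.Ico (N + 1) M, x ^ k / k ! ≤
        x ^ (N + 1) / (N + 1)! * (1 - s)⁻¹ := by
      rw [Finset.sum_Ico_eq_sum_range]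
      have hterm : ∀ j ∈ range (M - (N + 1)), x ^ (N + 1 + j) / (N + 1 + j)! ≤
          x ^ (N + 1) / (N + 1)! * s ^ j := by
        intro j _
        have hfge : ((N + 1)! : ℝ) * (N + 1 : ℕ) ^ j ≤ ((N + 1 + j)! : ℝ) := by
          exact_mod_cast aux_fact_ge (N + 1) j
        have hf1 : (0:ℝ) < (N + 1 + j)! := by positivity
        have hf2 : (0:ℝ) < ((N + 1)! : ℝ) * ((N + 1 : ℕ) : ℝ) ^ j := by positivity
        calc x ^ (N + 1 + j) / (N + 1 + j)! ≤
              x ^ (N + 1 + j) / (((N + 1)! : ℝ) * ((N + 1 : ℕ) : ℝ) ^ j) := by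
              exact div_le_div_of_nonneg_left (by positivity) hf2 (by exact_mod_cast hfge)
          _ = x ^ (N + 1) / (N + 1)! * (x / (N + 1 : ℕ)) ^ j := by
              rw [pow_add, div_pow]; field_simp
          _ ≤ x ^ (N + 1) / (N + 1)! * s ^ j := by
              apply mul_le_mul_of_nonneg_left _ (by positivity)
              apply pow_le_pow_left₀ (by positivity) _ j
              rw [div_le_iff₀ (by positivity)]
              push_cast
              linarith
      calc ∑ j ∈ range (M - (N + 1)), x ^ (N + 1 + j) / (N + 1 + j)! ≤
            ∑ j ∈ range (M - (N + 1)), x ^ (N + 1) / (N + 1)! * s ^ j :=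
            Finset.sum_le_sum hterm
        _ = x ^ (N + 1) / (N + 1)! * ∑ j ∈ range (M - (N + 1)), s ^ j := by
            rw [Finset.mul_sum]
        _ ≤ x ^ (N + 1) / (N + 1)! * (1 - s)⁻¹ := by
            apply mul_le_mul_of_nonneg_left _ (by positivity)
            exact sum_le_hasSum _ (fun i _ => by positivity)
              (hasSum_geometric_of_lt_one hs0 hs)
    linarith

lemma aux_pointwise (β : ℝ) (hβ : 0 < β) {s : ℝ} (hs : 0 < s) (hs1 : s ≠ 1) :
    Tendsto (fun N : ℕ => Real.exp (-(N * s)) *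
      ∑ k ∈ Finset.range (N + 1), ((N * (1 - β / N)) * s) ^ k / k !)
      atTop (nhds (if s ≤ 1 then Real.exp (-(β * s)) else 0)) := by
  set q : ℝ := s * Real.exp (1 - s) with hq_def
  have hq0 : 0 ≤ q := by positivity
  have hq1 : q < 1 := aux_q_lt_one hs hs1
  -- eventual rewriting : for N > β, N ≥ 1, (N * (1 - β/N)) * s = (N - β) * s
  have hev : ∀ᶠ N : ℕ in atTop, (Real.exp (-(N * s)) *
      ∑ k ∈ Finset.range (N + 1), ((N * (1 - β / N)) * s) ^ k / k !) =
      (Real.exp (-(N * s)) *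
      ∑ k ∈ Finset.range (N + 1), (((N : ℝ) - β) * s) ^ k / k !) := by
    filter_upwards [eventually_ge_atTop 1] with N hN
    have hN0 : (N : ℝ) ≠ 0 := Nat.cast_ne_zero.mpr (by omega)
    congr 1
    apply Finset.sum_congr rfl
    intro k _
    have h : (N : ℝ) * (1 - β / N) = (N : ℝ) - β := by field_simp
    rw [h]
  rw [tendsto_congr' hev]
  -- basic facts used in both cases
  have hexp_eq : ∀ N : ℕ, Real.exp (-(N * s)) * Real.exp (((N : ℝ) - β) * s) =
      Real.exp (-(β * s)) := by
    intro N
    rw [← Real.exp_add]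
    congr 1
    ring
  rcases hs1.lt_or_gt with hslt | hsgt
  · -- case s < 1
    rw [if_pos hslt.le]
    have hCq : Tendsto (fun N : ℕ => Real.exp (-(β * s)) -
        Real.exp 1 * s * (1 - s)⁻¹ * q ^ N) atTop (nhds (Real.exp (-(β * s)))) := by
      have := (tendsto_pow_atTop_nhds_zero_of_lt_one hq0 hq1).const_mul
        (Real.exp 1 * s * (1 - s)⁻¹)
      simpa using tendsto_const_nhds.sub this
    apply tendsto_of_tendsto_of_tendsto_of_le_of_le' hCq tendsto_const_nhds
    · -- lower bound eventually
      filter_upwards [eventually_gt_atTop (⌈β⌉₊)] with N hN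
      have hNβ : β < (N : ℝ) := lt_of_le_of_lt (Nat.le_ceil β) (by exact_mod_cast hN)
      set x : ℝ := ((N : ℝ) - β) * s with hx_def
      have hx0 : 0 ≤ x := by
        apply mul_nonneg _ hs.le
        linarith
      have hxs : x ≤ (N + 1) * s := by
        apply mul_le_mul_of_nonneg_right _ hs.le
        linarith
      have htail := aux_exp_tail hx0 hs.le hslt N hxs
      -- exp(-(Ns)) * x^(N+1)/(N+1)! ≤ exp 1 * s * q^N
      have hkey : Real.exp (-(N * s)) * (x ^ (N + 1) / (N + 1)!) ≤
          Real.exp 1 * s * q ^ N := by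
        have hst : ((N:ℝ) + 1) ^ (N + 1) ≤ ((N + 1)! : ℝ) * Real.exp ((N:ℝ) + 1) := by
          have h := aux_stirling (N + 1); push_cast at h; exact h
        have hf : (0:ℝ) < ((N + 1)! : ℝ) := by positivity
        have h1 : x ^ (N + 1) / ((N + 1)! : ℝ) ≤ (s * Real.exp 1) ^ (N + 1) := by
          rw [div_le_iff₀ hf]
          calc x ^ (N + 1) ≤ (((N:ℝ) + 1) * s) ^ (N + 1) :=
                pow_le_pow_left₀ hx0 hxs _
            _ = ((N:ℝ) + 1) ^ (N + 1) * s ^ (N + 1) := mul_pow _ _ _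
            _ ≤ ((N + 1)! : ℝ) * Real.exp ((N:ℝ) + 1) * s ^ (N + 1) :=
                mul_le_mul_of_nonneg_right hst (by positivity)
            _ = (s * Real.exp 1) ^ (N + 1) * (N + 1)! := by
                rw [mul_pow, ← Real.exp_nat_mul]
                push_cast
                rw [mul_one]
                ring
        calc Real.exp (-(N * s)) * (x ^ (N + 1) / (N + 1)!) ≤
              Real.exp (-(N * s)) * (s * Real.exp 1) ^ (N + 1) :=
              mul_le_mul_of_nonneg_left h1 (Real.exp_pos _).le
          _ = Real.exp 1 * s * q ^ N := by
              have hE2 : Real.exp (-(N * s)) * Real.exp (((N:ℝ) + 1) * 1) =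
                  Real.exp 1 * Real.exp ((N:ℝ) * (1 - s)) := by
                rw [← Real.exp_add, ← Real.exp_add]; congr 1; ring
              rw [hq_def, mul_pow, mul_pow, ← Real.exp_nat_mul, ← Real.exp_nat_mul]
              push_cast
              linear_combination s ^ (N + 1) * hE2
      have e1 : Real.exp (-((N:ℝ) * s)) * Real.exp x = Real.exp (-(β * s)) := hexp_eq N
      have hinv : (0:ℝ) ≤ (1 - s)⁻¹ := by
        have : (0:ℝ) < 1 - s := by linarith
        positivity
      have h3 : Real.exp (-((N:ℝ) * s)) * (x ^ (N + 1) / (N + 1)! * (1 - s)⁻¹) ≤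
          Real.exp 1 * s * (1 - s)⁻¹ * q ^ N := by
        calc Real.exp (-((N:ℝ) * s)) * (x ^ (N + 1) / (N + 1)! * (1 - s)⁻¹)
            = (Real.exp (-((N:ℝ) * s)) * (x ^ (N + 1) / (N + 1)!)) * (1 - s)⁻¹ := by ring
          _ ≤ (Real.exp 1 * s * q ^ N) * (1 - s)⁻¹ := mul_le_mul_of_nonneg_right hkey hinv
          _ = Real.exp 1 * s * (1 - s)⁻¹ * q ^ N := by ring
      have h4 : Real.exp x - x ^ (N + 1) / (N + 1)! * (1 - s)⁻¹ ≤
          ∑ k ∈ Finset.range (N + 1), x ^ k / k ! := by linarith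
      calc Real.exp (-(β * s)) - Real.exp 1 * s * (1 - s)⁻¹ * q ^ N
          ≤ Real.exp (-(β * s)) -
            Real.exp (-((N:ℝ) * s)) * (x ^ (N + 1) / (N + 1)! * (1 - s)⁻¹) := by linarith
        _ = Real.exp (-((N:ℝ) * s)) *
            (Real.exp x - x ^ (N + 1) / (N + 1)! * (1 - s)⁻¹) := by
            rw [mul_sub, e1]
        _ ≤ Real.exp (-((N:ℝ) * s)) * ∑ k ∈ Finset.range (N + 1), x ^ k / k ! :=
            mul_le_mul_of_nonneg_left h4 (Real.exp_pos _).le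
    · -- upper bound eventually
      filter_upwards [eventually_gt_atTop (⌈β⌉₊)] with N hN
      have hNβ : β < (N : ℝ) := lt_of_le_of_lt (Nat.le_ceil β) (by exact_mod_cast hN)
      have hx0 : 0 ≤ ((N : ℝ) - β) * s := mul_nonneg (by linarith) hs.le
      have hsum : ∑ k ∈ Finset.range (N + 1), (((N : ℝ) - β) * s) ^ k / k ! ≤
          Real.exp (((N : ℝ) - β) * s) := Real.sum_le_exp_of_nonneg hx0 _
      calc Real.exp (-(N * s)) * ∑ k ∈ Finset.range (N + 1), (((N : ℝ) - β) * s) ^ k / k !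
          ≤ Real.exp (-(N * s)) * Real.exp (((N : ℝ) - β) * s) :=
            mul_le_mul_of_nonneg_left hsum (Real.exp_pos _).le
        _ = Real.exp (-(β * s)) := hexp_eq N
  · -- case s > 1
    rw [if_neg (not_le.mpr hsgt)]
    have hupper : Tendsto (fun N : ℕ => ((N : ℝ) + 1) * q ^ N) atTop (nhds 0) := by
      have h1 := tendsto_pow_const_mul_const_pow_of_lt_one 1 hq0 hq1
      have h2 := tendsto_pow_atTop_nhds_zero_of_lt_one hq0 hq1
      have h3 := h1.add h2
      rw [add_zero] at h3
      exact h3.congr (fun n => by ring)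
    apply tendsto_of_tendsto_of_tendsto_of_le_of_le' tendsto_const_nhds hupper
    · -- 0 ≤ g N eventually
      filter_upwards [eventually_gt_atTop (⌈β⌉₊)] with N hN
      have hNβ : β < (N : ℝ) := lt_of_le_of_lt (Nat.le_ceil β) (by exact_mod_cast hN)
      have hx0 : 0 ≤ ((N : ℝ) - β) * s := mul_nonneg (by linarith) hs.le
      apply mul_nonneg (Real.exp_pos _).le
      apply Finset.sum_nonneg
      intro k _
      exact div_nonneg (pow_nonneg hx0 k) (by positivity)
    · -- g N ≤ (N+1) q^N eventually
      filter_upwards [eventually_gt_atTop (⌈β⌉₊), eventually_ge_atTop (⌈β * s / (s - 1)⌉₊)]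
        with N hN hN2
      have hNβ : β < (N : ℝ) := lt_of_le_of_lt (Nat.le_ceil β) (by exact_mod_cast hN)
      have hN2' : β * s / (s - 1) ≤ (N : ℝ) :=
        le_trans (Nat.le_ceil _) (by exact_mod_cast hN2)
      set x : ℝ := ((N : ℝ) - β) * s with hx_def
      have hs1' : (0:ℝ) < s - 1 := by linarith
      have hxN : (N : ℝ) ≤ x := by
        rw [div_le_iff₀ hs1'] at hN2'
        rw [hx_def]
        nlinarith
      have hx0 : (0:ℝ) < x := lt_of_lt_of_le (hβ.trans hNβ) hxN
      -- each term ≤ x^N / N!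
      have hterm : ∀ k ∈ range (N + 1), x ^ k / k ! ≤ x ^ N / N ! := by
        intro k hk
        have hkN : k ≤ N := Nat.lt_succ_iff.mp (Finset.mem_range.mp hk)
        have hfle : (N ! : ℝ) ≤ (k ! : ℝ) * (N : ℝ) ^ (N - k) := by
          have := aux_fact_le k (N - k)
          rw [Nat.add_sub_cancel' hkN] at this
          exact_mod_cast this
        have hk0 : (0:ℝ) < k ! := by positivity
        have hN0 : (0:ℝ) < N ! := by positivity
        rw [div_le_div_iff₀ hk0 hN0]
        calc x ^ k * N ! ≤ x ^ k * ((k ! : ℝ) * (N : ℝ) ^ (N - k)) :=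
              mul_le_mul_of_nonneg_left hfle (by positivity)
          _ ≤ x ^ k * ((k ! : ℝ) * x ^ (N - k)) := by
              apply mul_le_mul_of_nonneg_left _ (by positivity)
              apply mul_le_mul_of_nonneg_left _ (by positivity)
              exact pow_le_pow_left₀ (Nat.cast_nonneg N) hxN _
          _ = x ^ N * k ! := by
              rw [show x ^ k * ((k ! : ℝ) * x ^ (N - k)) = x ^ k * x ^ (N - k) * (k ! : ℝ) by ring,
                ← pow_add, Nat.add_sub_cancel' hkN]
      have hsum : ∑ k ∈ range (N + 1), x ^ k / k ! ≤ ((N : ℝ) + 1) * (x ^ N / N !) := by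
        calc ∑ k ∈ range (N + 1), x ^ k / k ! ≤ ∑ _k ∈ range (N + 1), x ^ N / N ! :=
              Finset.sum_le_sum hterm
          _ = ((N : ℝ) + 1) * (x ^ N / N !) := by
              rw [Finset.sum_const, Finset.card_range]
              push_cast
              ring
      have hst : (N : ℝ) ^ N ≤ (N ! : ℝ) * Real.exp N := aux_stirling N
      have hN0 : (0:ℝ) < N ! := by positivity
      have hxsN : x ≤ (N : ℝ) * s := by
        rw [hx_def]
        apply mul_le_mul_of_nonneg_right _ hs.le
        linarith
      have h2 : x ^ N / N ! ≤ (s * Real.exp 1) ^ N := by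
        rw [div_le_iff₀ hN0]
        calc x ^ N ≤ ((N : ℝ) * s) ^ N := pow_le_pow_left₀ hx0.le hxsN _
          _ = (N : ℝ) ^ N * s ^ N := mul_pow _ _ _
          _ ≤ (N ! : ℝ) * Real.exp N * s ^ N :=
              mul_le_mul_of_nonneg_right hst (by positivity)
          _ = (s * Real.exp 1) ^ N * N ! := by
              rw [mul_pow, ← Real.exp_nat_mul, mul_one]
              ring
      calc Real.exp (-(N * s)) * ∑ k ∈ Finset.range (N + 1), x ^ k / k !
          ≤ Real.exp (-(N * s)) * (((N : ℝ) + 1) * (x ^ N / N !)) := by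
            exact mul_le_mul_of_nonneg_left hsum (Real.exp_pos _).le
        _ ≤ Real.exp (-(N * s)) * (((N : ℝ) + 1) * (s * Real.exp 1) ^ N) := by
            apply mul_le_mul_of_nonneg_left _ (Real.exp_pos _).le
            exact mul_le_mul_of_nonneg_left h2 (by positivity)
        _ = ((N : ℝ) + 1) * q ^ N := by
            have hE : Real.exp (-((N:ℝ) * s)) * Real.exp ((N:ℝ) * 1) =
                Real.exp ((N:ℝ) * (1 - s)) := by
              rw [← Real.exp_add]; congr 1; ring
            rw [hq_def, mul_pow, mul_pow, ← Real.exp_nat_mul, ← Real.exp_nat_mul]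
            linear_combination (((N:ℝ) + 1) * s ^ N) * hE

lemma aux_integrable_rpow_exp {a b : ℝ} (ha : 0 < a) (hb : 0 < b) :
    IntegrableOn (fun s : ℝ => s ^ (a - 1) * Real.exp (-(b * s))) (Set.Ioi 0) := by
  have h := integrableOn_rpow_mul_exp_neg_mul_rpow (p := 1) (s := a - 1) (b := b)
    (by linarith) one_pos hb
  refine h.congr_fun (fun x _ => ?_) measurableSet_Ioi
  beta_reduce
  rw [Real.rpow_one, neg_mul]

lemma aux_meas (a b c : ℝ) (n : ℕ) :
    AEStronglyMeasurable
      (fun s : ℝ => s ^ (a - 1) * (Real.exp (-(b * s)) *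
        ∑ k ∈ Finset.range (n + 1), (c * s) ^ k / k !))
      (volume.restrict (Set.Ioi 0)) := by
  apply Measurable.aestronglyMeasurable
  fun_prop

lemma aux_eq_pt (α b c : ℝ) (k : ℕ) {s : ℝ} (hs : 0 < s) :
    s ^ (α - 1) * (Real.exp (-(b * s)) * ((c * s) ^ k / k !)) =
      c ^ k / k ! * (s ^ ((α + k) - 1) * Real.exp (-(b * s))) := by
  have h1 : s ^ (α - 1) * s ^ (k:ℕ) = s ^ ((α + k) - 1) := by
    rw [← Real.rpow_natCast s k, ← Real.rpow_add hs]
    ring_nf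
  rw [mul_pow, ← h1]
  field_simp

/-- Per-`k` integral identity. -/
lemma aux_per_k (α : ℝ) (hα : 0 < α) {N : ℕ} (hN : 0 < N) (c : ℝ) (hc : 0 ≤ c) (k : ℕ) :
    ∫ s in Set.Ioi (0:ℝ), s ^ (α - 1) * (Real.exp (-(N * s)) * ((c * s) ^ k / k !)) =
      c ^ k / k ! * ((1 / N) ^ (α + k) * Real.Gamma (α + k)) := by
  have hN0 : (0:ℝ) < N := Nat.cast_pos.mpr hN
  have heq : ∀ s ∈ Set.Ioi (0:ℝ),
      s ^ (α - 1) * (Real.exp (-(N * s)) * ((c * s) ^ k / k !)) =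
      c ^ k / k ! * (s ^ ((α + k) - 1) * Real.exp (-((N:ℝ) * s))) :=
    fun s hs => aux_eq_pt α (N:ℝ) c k hs
  rw [setIntegral_congr_fun measurableSet_Ioi heq, MeasureTheory.integral_const_mul,
    Real.integral_rpow_mul_exp_neg_mul_Ioi (by positivity) hN0]

/-- The key identity: partial sum expression equals an integral over `Ioi 0`. -/
lemma aux_identity (α β : ℝ) (hα : 0 < α) (hβ : 0 < β) {N : ℕ} (hN : β < N) :
    (N : ℝ) ^ (-α) * ∑ k ∈ Finset.range (N + 1),
        Real.Gamma (α + k) / (Nat.factorial k) * (1 - β / N) ^ k =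
      ∫ s in Set.Ioi (0:ℝ), s ^ (α - 1) * (Real.exp (-(N * s)) *
        ∑ k ∈ Finset.range (N + 1), ((N * (1 - β / N)) * s) ^ k / k !) := by
  have hN0 : (0:ℝ) < N := hβ.trans hN
  have hNn : 0 < N := by exact_mod_cast hN0
  set c : ℝ := N * (1 - β / N) with hc_def
  have hc : 0 ≤ c := by
    apply mul_nonneg hN0.le
    have : β / N < 1 := (div_lt_one hN0).mpr hN
    linarith
  have hint : ∀ k ∈ Finset.range (N + 1), IntegrableOn
      (fun s : ℝ => s ^ (α - 1) * (Real.exp (-(N * s)) * ((c * s) ^ k / k !)))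
      (Set.Ioi 0) := by
    intro k _
    have h : IntegrableOn
        (fun s : ℝ => c ^ k / k ! * (s ^ ((α + k) - 1) * Real.exp (-((N:ℝ) * s))))
        (Set.Ioi 0) :=
      (aux_integrable_rpow_exp (a := α + k) (by positivity) hN0).const_mul (c ^ k / k !)
    refine h.congr_fun (fun s hs => ?_) measurableSet_Ioi
    exact (aux_eq_pt α (N:ℝ) c k hs).symm
  have hsplit : (fun s : ℝ => s ^ (α - 1) * (Real.exp (-(N * s)) *
      ∑ k ∈ Finset.range (N + 1), (c * s) ^ k / k !)) =
      fun s : ℝ => ∑ k ∈ Finset.range (N + 1),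
        s ^ (α - 1) * (Real.exp (-(N * s)) * ((c * s) ^ k / k !)) := by
    funext s
    rw [Finset.mul_sum, Finset.mul_sum]
  rw [hsplit, integral_finset_sum _ hint]
  rw [Finset.mul_sum]
  apply Finset.sum_congr rfl
  intro k _
  rw [aux_per_k α hα hNn c hc k]
  -- now algebra: N^(-α) * (Γ(α+k)/k! * (1-β/N)^k) = c^k/k! * ((1/N)^(α+k) * Γ(α+k))
  have h2 : ((1:ℝ) / N) ^ (α + (k:ℝ)) = (N:ℝ) ^ (-α) * ((N:ℝ) ^ (k:ℕ))⁻¹ := by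
    rw [one_div, ← Real.rpow_neg_one (N:ℝ), ← Real.rpow_natCast (N:ℝ)  k,
      ← Real.rpow_mul hN0.le, ← Real.rpow_neg hN0.le, ← Real.rpow_add hN0]
    congr 1
    ring
  have h3 : c ^ k = (N:ℝ) ^ (k:ℕ) * (1 - β / N) ^ k := by
    rw [hc_def, mul_pow]
  rw [h2, h3]
  have hNk : ((N:ℝ) ^ (k:ℕ)) ≠ 0 := by positivity
  field_simp

/-- The interval integral as a set integral of an indicator over `Ioi 0`. -/
lemma aux_target (α β : ℝ) :
    (∫ x in (0:ℝ)..1, x ^ (α - 1) * Real.exp (-(β * x))) =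
      ∫ s in Set.Ioi (0:ℝ),
        Set.indicator (Set.Ioc 0 1) (fun x => x ^ (α - 1) * Real.exp (-(β * x))) s := by
  rw [intervalIntegral.integral_of_le zero_le_one,
    setIntegral_indicator measurableSet_Ioc]
  congr 1
  rw [Set.inter_eq_right.mpr Set.Ioc_subset_Ioi_self]

lemma aux_dct (α β : ℝ) (hα : 0 < α) (hβ : 0 < β) :
    Tendsto (fun N : ℕ => ∫ s in Set.Ioi (0:ℝ), s ^ (α - 1) * (Real.exp (-(N * s)) *
        ∑ k ∈ Finset.range (N + 1), ((N * (1 - β / N)) * s) ^ k / k !))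
      atTop (nhds (∫ x in (0:ℝ)..1, x ^ (α - 1) * Real.exp (-(β * x)))) := by
  set N₀ : ℕ := ⌈β⌉₊ + 1 with hN₀
  have hβN₀ : ∀ n : ℕ, β < ((n + N₀ : ℕ) : ℝ) := by
    intro n
    have h1 : β ≤ (⌈β⌉₊ : ℝ) := Nat.le_ceil β
    have h2 : (⌈β⌉₊ : ℝ) < ((n + N₀ : ℕ) : ℝ) := by
      push_cast [hN₀]
      linarith [Nat.cast_nonneg (α := ℝ) n]
    linarith
  rw [aux_target α β]
  rw [← tendsto_add_atTop_iff_nat N₀]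
  set F : ℕ → ℝ → ℝ := fun N s => s ^ (α - 1) * (Real.exp (-(N * s)) *
      ∑ k ∈ Finset.range (N + 1), ((N * (1 - β / N)) * s) ^ k / k !) with hF
  apply MeasureTheory.tendsto_integral_of_dominated_convergence
    (fun s => s ^ (α - 1) * Real.exp (-(β * s)))
  · exact fun n => aux_meas α _ _ _
  · exact aux_integrable_rpow_exp hα hβ
  · -- domination
    intro n
    rw [ae_restrict_iff' measurableSet_Ioi]
    apply Eventually.of_forall
    intro s hs
    have hs0 : (0:ℝ) < s := hs
    set M : ℕ := n + N₀
    have hβM : β < (M : ℝ) := hβN₀ n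
    have hM0 : (0:ℝ) < M := hβ.trans hβM
    have hc : (0:ℝ) ≤ (M : ℝ) * (1 - β / M) := by
      apply mul_nonneg hM0.le
      have : β / M < 1 := (div_lt_one hM0).mpr hβM
      linarith
    have hsum_nonneg : (0:ℝ) ≤ ∑ k ∈ Finset.range (M + 1), ((M * (1 - β / M)) * s) ^ k / k ! := by
      apply Finset.sum_nonneg
      intro k _
      exact div_nonneg (pow_nonneg (mul_nonneg hc hs0.le) k) (by positivity)
    have hF_nonneg : 0 ≤ F M s := by
      apply mul_nonneg (Real.rpow_nonneg hs0.le _)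
      exact mul_nonneg (Real.exp_pos _).le hsum_nonneg
    rw [Real.norm_eq_abs, abs_of_nonneg hF_nonneg]
    have hcs : (M : ℝ) * (1 - β / M) = (M : ℝ) - β := by
      field_simp
    have hsum_le : ∑ k ∈ Finset.range (M + 1), ((M * (1 - β / M)) * s) ^ k / k ! ≤
        Real.exp (((M : ℝ) - β) * s) := by
      rw [hcs]
      exact Real.sum_le_exp_of_nonneg (mul_nonneg (by linarith) hs0.le) _
    have hE : Real.exp (-((M:ℝ) * s)) * Real.exp (((M : ℝ) - β) * s) =
        Real.exp (-(β * s)) := by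
      rw [← Real.exp_add]; congr 1; ring
    calc F M s ≤ s ^ (α - 1) * (Real.exp (-((M:ℝ) * s)) * Real.exp (((M : ℝ) - β) * s)) := by
          apply mul_le_mul_of_nonneg_left _ (Real.rpow_nonneg hs0.le _)
          exact mul_le_mul_of_nonneg_left hsum_le (Real.exp_pos _).le
      _ = s ^ (α - 1) * Real.exp (-(β * s)) := by rw [hE]
  · -- a.e. pointwise convergence
    have h1 : ∀ᵐ s : ℝ ∂(volume.restrict (Set.Ioi 0)), s ≠ 1 := by
      refine ae_restrict_of_ae ?_
      rw [ae_iff]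
      have h : {s : ℝ | ¬s ≠ 1} = {1} := by ext t; simp
      rw [h]
      exact measure_singleton 1
    have h2 : ∀ᵐ s : ℝ ∂(volume.restrict (Set.Ioi 0)), s ∈ Set.Ioi (0:ℝ) :=
      self_mem_ae_restrict measurableSet_Ioi
    filter_upwards [h1, h2] with s hs1 hs
    have hs0 : (0:ℝ) < s := hs
    have hpt := (aux_pointwise β hβ hs0 hs1).comp (tendsto_add_atTop_nat N₀)
    have hind : Set.indicator (Set.Ioc 0 1) (fun x => x ^ (α - 1) * Real.exp (-(β * x))) s =
        s ^ (α - 1) * (if s ≤ 1 then Real.exp (-(β * s)) else 0) := by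
      rcases le_or_gt s 1 with h | h
      · rw [if_pos h, Set.indicator_of_mem (Set.mem_Ioc.mpr ⟨hs0, h⟩)]
      · rw [if_neg (not_le.mpr h), Set.indicator_of_notMem
          (fun hmem => absurd (Set.mem_Ioc.mp hmem).2 (not_le.mpr h)), mul_zero]
    rw [hind]
    exact (tendsto_const_nhds.mul hpt)

/-- For `α, β > 0`,
`lim_N N^(-α) Σ_{k=0}^N (Γ(α+k)/k!) (1-β/N)^k = ∫_0^1 x^(α-1) e^(-βx) dx = β^(-α) Γ(α,β)`. -/
theorem tendsto_sum_gamma_ratio (α β : ℝ) (hα : 0 < α) (hβ : 0 < β) :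
    Tendsto (fun N : ℕ => (N : ℝ) ^ (-α) *
        ∑ k ∈ Finset.range (N + 1),
          Real.Gamma (α + k) / (Nat.factorial k) * (1 - β / N) ^ k)
      atTop (nhds (∫ x in (0:ℝ)..1, x ^ (α - 1) * Real.exp (-(β * x)))) ∧
    (∫ x in (0:ℝ)..1, x ^ (α - 1) * Real.exp (-(β * x))) = β ^ (-α) * lGamma α β := by
  constructor
  · refine Tendsto.congr' ?_ (aux_dct α β hα hβ)
    filter_upwards [eventually_gt_atTop ⌈β⌉₊] with N hN
    have hβN : β < (N : ℝ) := lt_of_le_of_lt (Nat.le_ceil β) (by exact_mod_cast hN)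
    exact (aux_identity α β hα hβ hβN).symm
  · have hsub : ∫ x in (0:ℝ)..1, (fun s => s ^ (α - 1) * Real.exp (-s)) (β * x) =
        β⁻¹ • ∫ s in (β * 0)..(β * 1), s ^ (α - 1) * Real.exp (-s) :=
      intervalIntegral.integral_comp_mul_left (a := (0:ℝ)) (b := (1:ℝ))
        (fun s => s ^ (α - 1) * Real.exp (-s)) hβ.ne'
    rw [mul_zero, mul_one] at hsub
    have hcong : ∫ x in (0:ℝ)..1, (fun s => s ^ (α - 1) * Real.exp (-s)) (β * x) =
        ∫ x in (0:ℝ)..1, β ^ (α - 1) * (x ^ (α - 1) * Real.exp (-(β * x))) := by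
      apply intervalIntegral.integral_congr
      intro x hx
      have hx0 : 0 ≤ x := by
        rcases Set.mem_uIcc.mp hx with h | h
        · exact h.1
        · linarith [h.1, h.2]
      simp only
      rw [Real.mul_rpow hβ.le hx0]
      ring
    rw [hcong, intervalIntegral.integral_const_mul] at hsub
    -- hsub : β^(α-1) * ∫ = β⁻¹ • lGamma
    have hβα : β ^ (-α) * β ^ (α - 1) * β = 1 := by
      rw [← Real.rpow_add hβ, show -α + (α - 1) = -1 by ring, Real.rpow_neg_one]
      exact inv_mul_cancel₀ hβ.ne'
    have hL : lGamma α β =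
        β * (β ^ (α - 1) * ∫ x in (0:ℝ)..1, x ^ (α - 1) * Real.exp (-(β * x))) := by
      rw [hsub, smul_eq_mul, ← mul_assoc, mul_inv_cancel₀ hβ.ne', one_mul]
      rfl
    rw [hL]
    linear_combination (-(∫ x in (0:ℝ)..1, x ^ (α - 1) * Real.exp (-(β * x)))) * hβα
end

section
/- Let α > 0 and let (α_N) be a non-increasing real sequence with α_N ↓ α and (α_N − α) log N → 0, and let (β_N) be a real sequence with β_N → β > 0. Then lim_{N→∞} N^{-α_N} Σ_{k=0}^{N} (Γ(α_N + k)/k!) (1 − β_N/N)^k = β^{-α} Γ(α,β). -/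
open MeasureTheory Real Filter Finset

noncomputable def pexp (N : ℕ) (y : ℝ) : ℝ := ∑ k ∈ Finset.range (N+1), y ^ k / k.factorial

lemma pexp_nonneg (N : ℕ) {y : ℝ} (hy : 0 ≤ y) : 0 ≤ pexp N y := by
  apply Finset.sum_nonneg
  intro k _
  positivity

lemma pexp_le_exp (N : ℕ) {y : ℝ} (hy : 0 ≤ y) : pexp N y ≤ Real.exp y :=
  Real.sum_le_exp_of_nonneg hy (N+1)

lemma pow_div_factorial_le_exp {y : ℝ} (hy : 0 ≤ y) (n : ℕ) :
    y ^ n / n.factorial ≤ Real.exp y := by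
  refine le_trans ?_ (pexp_le_exp n hy)
  unfold pexp
  exact Finset.single_le_sum (f := fun k => y ^ k / k.factorial)
    (fun k _ => by positivity) (Finset.self_mem_range_succ n)

lemma pow_self_le_exp_mul_factorial (n : ℕ) :
    (n : ℝ) ^ n ≤ Real.exp n * n.factorial := by
  have h := pow_div_factorial_le_exp (y := (n:ℝ)) (Nat.cast_nonneg n) n
  have hf : (0:ℝ) < n.factorial := by positivity
  rw [div_le_iff₀ hf] at h
  linarith [h]

-- e^{-y} y^n / n! ≤ exp(n (1 - y/n + log(y/n)))
lemma pmf_bound {y : ℝ} (hy : 0 < y) {n : ℕ} (hn : 0 < n) :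
    Real.exp (-y) * (y ^ n / n.factorial) ≤
      Real.exp ((n : ℝ) * (1 - y / n + Real.log (y / n))) := by
  have hn' : (0:ℝ) < n := by exact_mod_cast hn
  have hf : (0:ℝ) < n.factorial := by positivity
  have h1 : (1:ℝ) / n.factorial ≤ Real.exp n / (n:ℝ) ^ n := by
    rw [div_le_div_iff₀ hf (by positivity)]
    have := pow_self_le_exp_mul_factorial n
    linarith
  have h2 : Real.exp (-y) * (y ^ n / n.factorial)
      ≤ Real.exp (-y) * (y ^ n * (Real.exp n / (n:ℝ) ^ n)) := by
    have : y ^ n / n.factorial = y ^ n * (1 / n.factorial) := by ring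
    rw [this]
    have hyn : (0:ℝ) ≤ y ^ n := by positivity
    have := mul_le_mul_of_nonneg_left h1 hyn
    nlinarith [Real.exp_pos (-y)]
  refine h2.trans_eq ?_
  have hyx : y ^ n / (n:ℝ) ^ n = (y / n) ^ n := by rw [div_pow]
  have hu : 0 < y / n := by positivity
  have hlog : ((y / n) : ℝ) ^ n = Real.exp ((n:ℝ) * Real.log (y / n)) := by
    rw [← Real.log_pow, Real.exp_log (by positivity)]
  calc Real.exp (-y) * (y ^ n * (Real.exp n / (n:ℝ) ^ n))
      = Real.exp (-y) * Real.exp n * ((y/n)^n) := by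
        rw [← hyx]
        ring
    _ = Real.exp (-y) * Real.exp n * Real.exp ((n:ℝ) * Real.log (y/n)) := by rw [hlog]
    _ = Real.exp (-y + n + n * Real.log (y/n)) := by
        rw [← Real.exp_add, ← Real.exp_add]
    _ = Real.exp ((n:ℝ) * (1 - y/n + Real.log (y/n))) := by
        congr 1
        field_simp
        ring

-- g(u) = 1 - u + log u monotone on (0,1]
lemma g_mono_le_one {u t : ℝ} (hu : 0 < u) (hut : u ≤ t) (ht : t ≤ 1) :
    1 - u + Real.log u ≤ 1 - t + Real.log t := by
  have ht0 : 0 < t := lt_of_lt_of_le hu hut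
  have h := Real.log_le_sub_one_of_pos (x := u / t) (by positivity)
  rw [Real.log_div hu.ne' ht0.ne'] at h
  have h2 : u / t - 1 ≤ u - t := by
    rw [div_sub_one ht0.ne']
    rw [div_le_iff₀ ht0]
    nlinarith
  linarith

-- g antitone on [1,∞)
lemma g_anti_ge_one {v u : ℝ} (hv : 1 ≤ v) (hvu : v ≤ u) :
    1 - u + Real.log u ≤ 1 - v + Real.log v := by
  have hv0 : 0 < v := lt_of_lt_of_le one_pos hv
  have hu0 : 0 < u := lt_of_lt_of_le hv0 hvu
  have h := Real.log_le_sub_one_of_pos (x := u / v) (by positivity)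
  rw [Real.log_div hu0.ne' hv0.ne'] at h
  have h2 : u / v - 1 ≤ u - v := by
    rw [div_sub_one hv0.ne', div_le_iff₀ hv0]
    nlinarith
  linarith

set_option maxHeartbeats 1000000 in
-- tail bound for exp
lemma exp_sub_pexp_le {y c : ℝ} {N : ℕ} (hy : 0 ≤ y) (hc : c < 1)
    (hyc : y ≤ c * (N + 1)) :
    Real.exp y - pexp N y ≤ y ^ (N+1) / (N+1).factorial * (1 - c)⁻¹ := by
  have hc0 : 0 ≤ c := by
    by_contra h
    push_neg at h
    nlinarith [hy.trans hyc]
  have hsum : Summable (fun k : ℕ => y ^ k / k.factorial) := Real.summable_pow_div_factorial y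
  have hexp : Real.exp y = ∑' k : ℕ, y ^ k / k.factorial := by
    rw [Real.exp_eq_exp_ℝ, NormedSpace.exp_eq_tsum_div]
  have hsplit := Summable.sum_add_tsum_nat_add (N+1) hsum
  have htail : Real.exp y - pexp N y = ∑' j : ℕ, y ^ (j + (N+1)) / (j + (N+1)).factorial := by
    rw [hexp, ← hsplit]
    unfold pexp
    ring
  rw [htail]
  -- bound termwise by geometric
  have hterm : ∀ j : ℕ, y ^ (j + (N+1)) / (j + (N+1)).factorial
      ≤ y ^ (N+1) / (N+1).factorial * c ^ j := by
    intro j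
    have hfac : ((N+1).factorial : ℝ) * ((N+2):ℝ) ^ j ≤ ((j + (N+1)).factorial : ℝ) := by
      have := Nat.factorial_mul_pow_le_factorial (m := N+1) (n := j)
      have h2 : (N+1) + j = j + (N+1) := by ring
      rw [h2] at this
      exact_mod_cast this
    have hf1 : (0:ℝ) < (N+1).factorial := by positivity
    have hf2 : (0:ℝ) < ((j + (N+1)).factorial : ℝ) := by positivity
    rw [div_le_iff₀ hf2]
    have hpow : y ^ (j + (N+1)) = y ^ (N+1) * y ^ j := by rw [pow_add]; ring
    rw [hpow]
    calc y ^ (N+1) * y ^ j ≤ y ^ (N+1) * (c * (N+2)) ^ j := by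
          apply mul_le_mul_of_nonneg_left _ (by positivity)
          apply pow_le_pow_left₀ hy
          calc y ≤ c * (N+1) := hyc
            _ ≤ c * (N+2) := by nlinarith
      _ = y ^ (N+1) * c ^ j * ((N+2):ℝ) ^ j := by rw [mul_pow]; ring
      _ = (y ^ (N+1) / (N+1).factorial * c ^ j) * ((N+1).factorial * ((N+2):ℝ) ^ j) := by
          have hf1' : ((N+1).factorial : ℝ) ≠ 0 := by positivity
          field_simp
      _ ≤ (y ^ (N+1) / (N+1).factorial * c ^ j) * ((j + (N+1)).factorial : ℝ) := by
          apply mul_le_mul_of_nonneg_left _ (by positivity)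
          exact_mod_cast hfac
  have hS1 : Summable (fun j : ℕ => y ^ (j + (N+1)) / (j + (N+1)).factorial) :=
    (summable_nat_add_iff (N+1)).2 hsum
  have hS2 : Summable (fun j : ℕ => y ^ (N+1) / (N+1).factorial * c ^ j) :=
    (summable_geometric_of_lt_one hc0 hc).mul_left _
  calc (∑' j : ℕ, y ^ (j + (N+1)) / (j + (N+1)).factorial)
      ≤ ∑' j : ℕ, y ^ (N+1) / (N+1).factorial * c ^ j := Summable.tsum_le_tsum hterm hS1 hS2
    _ = y ^ (N+1) / (N+1).factorial * (1 - c)⁻¹ := by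
        rw [tsum_mul_left, tsum_geometric_of_lt_one hc0 hc]

lemma term_le_term_add {y : ℝ} (k : ℕ) : ∀ j : ℕ, ((k + j : ℕ) : ℝ) ≤ y →
    y ^ k / k.factorial ≤ y ^ (k + j) / (k + j).factorial := by
  intro j
  induction j with
  | zero => intro _; simp
  | succ n ih =>
    intro hy
    have hy' : ((k + n : ℕ) : ℝ) ≤ y := by
      refine le_trans ?_ hy
      push_cast
      linarith
    have hy0 : 0 ≤ y := le_trans (by positivity) hy'
    refine (ih hy').trans ?_
    have hstep : y ^ (k + n) / (k + n).factorial ≤ y ^ (k + n + 1) / (k + n + 1).factorial := by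
      rw [pow_succ, Nat.factorial_succ]
      rw [div_le_div_iff₀ (by positivity) (by positivity)]
      push_cast
      have h1 : ((k:ℝ) + n + 1) ≤ y := by
        push_cast at hy
        linarith
      have hA : (0:ℝ) ≤ y ^ (k+n) * ((k + n).factorial : ℝ) := by positivity
      nlinarith [mul_le_mul_of_nonneg_right h1 hA]
    exact hstep
  
lemma pexp_le_of_ge {y : ℝ} {N : ℕ} (hy : (N : ℝ) ≤ y) :
    pexp N y ≤ (N + 1) * (y ^ N / N.factorial) := by
  have hy0 : 0 ≤ y := le_trans (Nat.cast_nonneg N) hy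
  unfold pexp
  calc ∑ k ∈ Finset.range (N+1), y ^ k / k.factorial
      ≤ ∑ _k ∈ Finset.range (N+1), y ^ N / N.factorial := by
        apply Finset.sum_le_sum
        intro k hk
        have hkN : k ≤ N := Nat.lt_succ_iff.mp (Finset.mem_range.mp hk)
        have := term_le_term_add (y := y) k (N - k) (by
          rwa [Nat.add_sub_cancel' hkN])
        rwa [Nat.add_sub_cancel' hkN] at this
    _ = (N + 1) * (y ^ N / N.factorial) := by
        rw [Finset.sum_const, Finset.card_range]
        push_cast
        ring

lemma key_lt_one {β : ℝ} (hβ : 0 < β) {b : ℕ → ℝ} (hb : Tendsto b atTop (nhds β))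
    {t : ℝ} (ht0 : 0 < t) (ht1 : t < 1) :
    Tendsto (fun N : ℕ => Real.exp (-((N:ℝ)*t)) * pexp N ((1 - b N / N) * N * t))
      atTop (nhds (Real.exp (-(β*t)))) := by
  have hbpos : ∀ᶠ N : ℕ in atTop, 0 < b N :=
    hb.eventually (eventually_gt_nhds hβ)
  have hdiv : Tendsto (fun N : ℕ => b N / N) atTop (nhds 0) :=
    hb.div_atTop tendsto_natCast_atTop_atTop
  have hdivlt : ∀ᶠ N : ℕ in atTop, b N / N < 1 :=
    hdiv.eventually (eventually_lt_nhds one_pos)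
  have hN1 : ∀ᶠ N : ℕ in atTop, 1 ≤ N := eventually_ge_atTop 1
  -- the good event
  have hE : ∀ᶠ N : ℕ in atTop, 0 < b N ∧ b N / N < 1 ∧ 1 ≤ N :=
    hbpos.and (hdivlt.and hN1) |>.mono (fun N h => ⟨h.1, h.2.1, h.2.2⟩)
  set y : ℕ → ℝ := fun N => (1 - b N / N) * N * t with hy_def
  -- properties of y on the event
  have hyprop : ∀ᶠ N : ℕ in atTop, 0 < y N ∧ y N ≤ t * (N + 1) ∧
      Real.exp (-((N:ℝ)*t)) = Real.exp (-(b N * t)) * Real.exp (-(y N)) := by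
    filter_upwards [hE] with N ⟨h1, h2, h3⟩
    have hN0 : (0:ℝ) < N := by exact_mod_cast h3
    have hx : 0 < 1 - b N / N := by linarith
    constructor
    · positivity
    constructor
    · have : y N ≤ 1 * N * t := by
        apply mul_le_mul_of_nonneg_right _ ht0.le
        apply mul_le_mul_of_nonneg_right _ hN0.le
        nlinarith [div_pos h1 hN0]
      calc y N ≤ 1 * N * t := this
        _ = t * N := by ring
        _ ≤ t * (N+1) := by nlinarith
    · rw [← Real.exp_add]
      congr 1
      have : b N / N * N = b N := div_mul_cancel₀ _ hN0.ne'
      field_simp [hy_def]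
      simp only [hy_def]
      linear_combination (-t) * this
  -- B_N → 1
  set r : ℝ := Real.exp (1 - t + Real.log t) with hr_def
  have hr1 : r < 1 := by
    rw [hr_def, Real.exp_lt_one_iff]
    have := Real.log_lt_sub_one_of_pos ht0 ht1.ne
    linarith
  have hr0 : 0 ≤ r := Real.exp_nonneg _
  have hB : Tendsto (fun N : ℕ => Real.exp (-(y N)) * pexp N (y N)) atTop (nhds 1) := by
    have hub : ∀ᶠ N : ℕ in atTop, Real.exp (-(y N)) * pexp N (y N) ≤ 1 := by
      filter_upwards [hyprop] with N ⟨h1, _, _⟩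
      calc Real.exp (-(y N)) * pexp N (y N) ≤ Real.exp (-(y N)) * Real.exp (y N) :=
            mul_le_mul_of_nonneg_left (pexp_le_exp N h1.le) (Real.exp_nonneg _)
        _ = 1 := by rw [← Real.exp_add]; simp
    have hlb : ∀ᶠ N : ℕ in atTop,
        1 - (1-t)⁻¹ * r ^ (N+1) ≤ Real.exp (-(y N)) * pexp N (y N) := by
      filter_upwards [hyprop] with N ⟨h1, h2, _⟩
      have hkey : Real.exp (-(y N)) * (Real.exp (y N) - pexp N (y N))
          ≤ (1-t)⁻¹ * r ^ (N+1) := by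
        have htail := exp_sub_pexp_le (N := N) h1.le ht1 (by
          calc y N ≤ t * (N+1) := h2
            _ = t * ((N:ℝ)+1) := by push_cast; ring)
        have hstep : Real.exp (-(y N)) * (Real.exp (y N) - pexp N (y N))
            ≤ Real.exp (-(y N)) * (y N ^ (N+1) / (N+1).factorial) * (1-t)⁻¹ := by
          have h3 : (0:ℝ) ≤ (1-t)⁻¹ := inv_nonneg.mpr (by linarith)
          calc Real.exp (-(y N)) * (Real.exp (y N) - pexp N (y N))
              ≤ Real.exp (-(y N)) * (y N ^ (N+1) / (N+1).factorial * (1-t)⁻¹) :=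
                mul_le_mul_of_nonneg_left htail (Real.exp_nonneg _)
            _ = Real.exp (-(y N)) * (y N ^ (N+1) / (N+1).factorial) * (1-t)⁻¹ := by ring
        refine hstep.trans ?_
        have hpmf := pmf_bound (y := y N) h1 (n := N+1) (Nat.succ_pos N)
        have hu0 : 0 < y N / ((N:ℝ)+1) := by positivity
        have hut : y N / ((N:ℝ)+1) ≤ t := by
          rw [div_le_iff₀ (by positivity)]
          calc y N ≤ t * (N+1) := h2
            _ = t * ((N:ℝ)+1) := by push_cast; ring
        have hg := g_mono_le_one hu0 hut ht1.le
        have hmono : Real.exp (((N:ℝ) + 1) * (1 - y N / ((N:ℝ)+1) + Real.log (y N / ((N:ℝ)+1))))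
            ≤ r ^ (N+1) := by
          rw [hr_def, ← Real.exp_nat_mul]
          apply Real.exp_le_exp.mpr
          have hc : (0:ℝ) ≤ (N:ℝ) + 1 := by positivity
          push_cast
          nlinarith [hg]
        push_cast at hpmf
        have := hpmf.trans hmono
        calc Real.exp (-(y N)) * (y N ^ (N+1) / (N+1).factorial) * (1-t)⁻¹
            ≤ r ^ (N+1) * (1-t)⁻¹ := by
              apply mul_le_mul_of_nonneg_right _ (inv_nonneg.mpr (by linarith))
              exact_mod_cast this
          _ = (1-t)⁻¹ * r ^ (N+1) := by ring
      have hexpand : Real.exp (-(y N)) * pexp N (y N)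
          = 1 - Real.exp (-(y N)) * (Real.exp (y N) - pexp N (y N)) := by
        have : Real.exp (-(y N)) * Real.exp (y N) = 1 := by rw [← Real.exp_add]; simp
        nlinarith [this]
      rw [hexpand]
      linarith
    have hlim_lb : Tendsto (fun N : ℕ => 1 - (1-t)⁻¹ * r ^ (N+1)) atTop (nhds 1) := by
      have h1 : Tendsto (fun N : ℕ => r ^ (N+1)) atTop (nhds 0) :=
        (tendsto_pow_atTop_nhds_zero_of_lt_one hr0 hr1).comp (tendsto_add_atTop_nat 1)
      have := (h1.const_mul ((1-t)⁻¹)).const_sub 1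
      simpa using this
    exact tendsto_of_tendsto_of_tendsto_of_le_of_le' hlim_lb tendsto_const_nhds hlb hub
  -- A_N → exp(-(β t))
  have hA : Tendsto (fun N : ℕ => Real.exp (-(b N * t))) atTop (nhds (Real.exp (-(β*t)))) := by
    have h1 : Tendsto (fun N : ℕ => -(b N * t)) atTop (nhds (-(β*t))) := (hb.mul_const t).neg
    exact (Real.continuous_exp.tendsto _).comp h1
  have hfull := hA.mul hB
  rw [mul_one] at hfull
  refine Tendsto.congr' ?_ hfull
  filter_upwards [hyprop] with N ⟨_, _, h3⟩
  rw [h3]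
  ring

lemma key_gt_one {β : ℝ} (hβ : 0 < β) {b : ℕ → ℝ} (hb : Tendsto b atTop (nhds β))
    {t : ℝ} (ht1 : 1 < t) :
    Tendsto (fun N : ℕ => Real.exp (-((N:ℝ)*t)) * pexp N ((1 - b N / N) * N * t))
      atTop (nhds 0) := by
  have ht0 : 0 < t := lt_trans one_pos ht1
  have hbpos : ∀ᶠ N : ℕ in atTop, 0 < b N := hb.eventually (eventually_gt_nhds hβ)
  have hdiv : Tendsto (fun N : ℕ => b N / N) atTop (nhds 0) :=
    hb.div_atTop tendsto_natCast_atTop_atTop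
  have hsmall : ∀ᶠ N : ℕ in atTop, b N / N < (t - 1) / t :=
    hdiv.eventually (eventually_lt_nhds (by apply div_pos <;> linarith))
  have hN1 : ∀ᶠ N : ℕ in atTop, 1 ≤ N := eventually_ge_atTop 1
  set r : ℝ := Real.exp (1 - t + Real.log t) with hr_def
  have hr1 : r < 1 := by
    rw [hr_def, Real.exp_lt_one_iff]
    have := Real.log_lt_sub_one_of_pos ht0 (ne_of_gt ht1)
    linarith
  have hr0 : 0 ≤ r := Real.exp_nonneg _
  -- bound: 0 ≤ F N ≤ (N+1) * r^N eventually
  have hub : ∀ᶠ N : ℕ in atTop,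
      Real.exp (-((N:ℝ)*t)) * pexp N ((1 - b N / N) * N * t) ≤ ((N:ℝ)+1) * r ^ N := by
    filter_upwards [hbpos, hsmall, hN1] with N h1 h2 h3
    have hN0 : (0:ℝ) < N := by exact_mod_cast h3
    set y : ℝ := (1 - b N / N) * N * t with hy_def
    have hxt : 1 ≤ (1 - b N / N) * t := by
      have : b N / N ≤ (t-1)/t := h2.le
      rw [div_le_div_iff₀ hN0 ht0] at *
      have h4 : b N / N * t ≤ t - 1 := by
        rw [div_mul_eq_mul_div, div_le_iff₀ hN0]
        have := h2.le
        rw [div_lt_div_iff₀ hN0 ht0] at h2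
        nlinarith
      nlinarith [div_nonneg h1.le hN0.le]
    have hyN : (N:ℝ) ≤ y := by
      calc (N:ℝ) = N * 1 := by ring
        _ ≤ N * ((1 - b N / N) * t) := by nlinarith
        _ = y := by rw [hy_def]; ring
    have hy0 : 0 < y := lt_of_lt_of_le hN0 hyN
    have hx1 : 1 - b N / N ≤ 1 := by
      have : 0 < b N / N := div_pos h1 hN0
      linarith
    have hyt : y / N ≤ t := by
      rw [div_le_iff₀ hN0, hy_def]
      nlinarith [mul_nonneg (mul_nonneg (div_nonneg h1.le hN0.le) hN0.le) ht0.le]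
    -- pexp bound
    have hp := pexp_le_of_ge (y := y) (N := N) hyN
    have hexp_nonneg : (0:ℝ) ≤ Real.exp (-((N:ℝ)*t)) := Real.exp_nonneg _
    have step1 : Real.exp (-((N:ℝ)*t)) * pexp N y
        ≤ ((N:ℝ)+1) * (Real.exp (-((N:ℝ)*t)) * (y ^ N / N.factorial)) := by
      have := mul_le_mul_of_nonneg_left hp hexp_nonneg
      calc Real.exp (-((N:ℝ)*t)) * pexp N y
          ≤ Real.exp (-((N:ℝ)*t)) * (((N:ℕ) + 1) * (y ^ N / N.factorial)) := by
            exact_mod_cast this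
        _ = ((N:ℝ)+1) * (Real.exp (-((N:ℝ)*t)) * (y ^ N / N.factorial)) := by push_cast; ring
    refine step1.trans ?_
    apply mul_le_mul_of_nonneg_left _ (by positivity)
    -- exp(-Nt) y^N/N! ≤ r^N
    have hfac : (1:ℝ) / N.factorial ≤ Real.exp N / (N:ℝ) ^ N := by
      rw [div_le_div_iff₀ (by positivity) (by positivity)]
      have := pow_self_le_exp_mul_factorial N
      linarith
    have step2 : Real.exp (-((N:ℝ)*t)) * (y ^ N / N.factorial)
        ≤ Real.exp (-((N:ℝ)*t)) * (Real.exp N * (y / N) ^ N) := by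
      have h5 : y ^ N / N.factorial = y ^ N * (1 / N.factorial) := by ring
      have h6 : y ^ N * (Real.exp N / (N:ℝ) ^ N) = Real.exp N * (y/N)^N := by
        rw [div_pow]
        field_simp
      rw [h5, ← h6]
      apply mul_le_mul_of_nonneg_left _ hexp_nonneg
      apply mul_le_mul_of_nonneg_left hfac (by positivity)
    refine step2.trans ?_
    have h7 : (y / N) ^ N = Real.exp ((N:ℝ) * Real.log (y / N)) := by
      rw [← Real.log_pow, Real.exp_log (by positivity)]
    rw [h7, ← Real.exp_add, ← Real.exp_add, hr_def, ← Real.exp_nat_mul]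
    apply Real.exp_le_exp.mpr
    have hlog : Real.log (y / N) ≤ Real.log t := Real.log_le_log (by positivity) hyt
    nlinarith [hN0]
  have hlb : ∀ᶠ N : ℕ in atTop,
      0 ≤ Real.exp (-((N:ℝ)*t)) * pexp N ((1 - b N / N) * N * t) := by
    filter_upwards [hbpos, hsmall, hN1] with N h1 h2 h3
    have hN0 : (0:ℝ) < N := by exact_mod_cast h3
    have hx0 : 0 ≤ 1 - b N / N := by
      have hlt : b N / N < 1 := lt_of_lt_of_le h2 (by
        rw [div_le_one ht0]; linarith)
      linarith
    have := pexp_nonneg N (y := (1 - b N / N) * N * t) (by positivity)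
    positivity
  have hlim : Tendsto (fun N : ℕ => ((N:ℝ)+1) * r ^ N) atTop (nhds 0) := by
    have h1 : Tendsto (fun N : ℕ => (N:ℝ) * r ^ N) atTop (nhds 0) := by
      have := (summable_pow_mul_geometric_of_norm_lt_one 1 (by
        rwa [Real.norm_eq_abs, abs_of_nonneg hr0] : ‖r‖ < 1)).tendsto_atTop_zero
      simpa using this
    have h2 : Tendsto (fun N : ℕ => r ^ N) atTop (nhds 0) :=
      tendsto_pow_atTop_nhds_zero_of_lt_one hr0 hr1
    have := h1.add h2
    rw [add_zero] at this
    refine this.congr (fun N => by ring)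
  exact tendsto_of_tendsto_of_tendsto_of_le_of_le' tendsto_const_nhds hlim hlb hub

lemma gamma_sum_eq (c x : ℝ) (hc : 0 < c) (N : ℕ) (hN : 0 < N) :
    (N:ℝ) ^ (-c) * ∑ k ∈ Finset.range (N+1), Real.Gamma (c + k) / k.factorial * x ^ k
    = ∫ t in Set.Ioi (0:ℝ), t ^ (c - 1) * (Real.exp (-((N:ℝ)*t)) * pexp N (x * N * t)) := by
  have hN0 : (0:ℝ) < N := by exact_mod_cast hN
  -- step 1: each term as an integral
  have h1 : ∀ k ∈ Finset.range (N+1), Real.Gamma (c + k) / k.factorial * x ^ k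
      = ∫ s in Set.Ioi (0:ℝ), (Real.exp (-s) * s ^ (c + k - 1)) * (x ^ k / k.factorial) := by
    intro k _
    rw [Real.Gamma_eq_integral (by positivity), MeasureTheory.integral_mul_const]
    ring
  rw [Finset.sum_congr rfl h1]
  rw [← MeasureTheory.integral_finset_sum]
  swap
  · intro k _
    exact (Real.GammaIntegral_convergent (by positivity : (0:ℝ) < c + k)).mul_const _
  -- step 2: rewrite integrand
  have h2 : ∫ s in Set.Ioi (0:ℝ),
        (∑ k ∈ Finset.range (N+1), (Real.exp (-s) * s ^ (c + k - 1)) * (x ^ k / k.factorial))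
      = ∫ s in Set.Ioi (0:ℝ), Real.exp (-s) * s ^ (c - 1) * pexp N (x * s) := by
    apply MeasureTheory.setIntegral_congr_fun measurableSet_Ioi
    intro s hs
    simp only
    have hs0 : (0:ℝ) < s := hs
    have hpow : ∀ k : ℕ, s ^ (c + k - 1) = s ^ (c - 1) * s ^ k := by
      intro k
      rw [show c + k - 1 = (c - 1) + (k:ℝ) by ring, Real.rpow_add hs0, Real.rpow_natCast]
    unfold pexp
    rw [Finset.mul_sum]
    apply Finset.sum_congr rfl
    intro k _
    rw [hpow k, mul_pow]
    ring
  rw [h2]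
  -- step 3: substitution s = N t
  set g : ℝ → ℝ := fun s => Real.exp (-s) * s ^ (c - 1) * pexp N (x * s) with hg_def
  have h3 := MeasureTheory.integral_comp_mul_left_Ioi g 0 hN0
  rw [mul_zero] at h3
  rw [smul_eq_mul] at h3
  -- h3 : ∫ t in Ioi 0, g (N * t) = N⁻¹ * ∫ s in Ioi 0, g s
  have h4 : ∫ s in Set.Ioi (0:ℝ), g s = (N:ℝ) * ∫ t in Set.Ioi (0:ℝ), g ((N:ℝ) * t) := by
    rw [h3]
    field_simp
  rw [h4]
  -- step 4: rewrite g (N t)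
  have h5 : ∫ t in Set.Ioi (0:ℝ), g ((N:ℝ) * t)
      = ∫ t in Set.Ioi (0:ℝ), (N:ℝ) ^ (c-1) *
          (t ^ (c - 1) * (Real.exp (-((N:ℝ)*t)) * pexp N (x * N * t))) := by
    apply MeasureTheory.setIntegral_congr_fun measurableSet_Ioi
    intro t ht
    have ht0 : (0:ℝ) < t := ht
    simp only [hg_def]
    rw [Real.mul_rpow hN0.le ht0.le]
    rw [show x * ((N:ℝ) * t) = x * N * t by ring]
    ring
  rw [h5, MeasureTheory.integral_const_mul]
  rw [← mul_assoc, ← mul_assoc]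
  have h6 : (N:ℝ) ^ (-c) * (N:ℝ) * (N:ℝ) ^ (c-1) = 1 := by
    nth_rewrite 2 [show (N:ℝ) = (N:ℝ) ^ (1:ℝ) by rw [Real.rpow_one]]
    rw [← Real.rpow_add hN0, ← Real.rpow_add hN0]
    norm_num
  rw [h6, one_mul]

lemma limit_integral_eq {α β : ℝ} (hα : 0 < α) (hβ : 0 < β) :
    (∫ t in Set.Ioi (0:ℝ),
      Set.indicator (Set.Ioo 0 1) (fun t => t ^ (α-1) * Real.exp (-(β*t))) t)
      = β ^ (-α) * lGamma α β := by
  rw [MeasureTheory.integral_indicator measurableSet_Ioo]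
  rw [Measure.restrict_restrict measurableSet_Ioo]
  rw [Set.inter_eq_left.mpr Set.Ioo_subset_Ioi_self]
  have h1 : (∫ t in Set.Ioo (0:ℝ) 1, t ^ (α-1) * Real.exp (-(β*t)))
      = ∫ t in (0:ℝ)..1, t ^ (α-1) * Real.exp (-(β*t)) := by
    rw [intervalIntegral.integral_of_le zero_le_one,
      MeasureTheory.integral_Ioc_eq_integral_Ioo]
  rw [h1]
  have h2 := intervalIntegral.integral_comp_mul_left (a := (0:ℝ)) (b := (1:ℝ))
    (fun s => s ^ (α-1) * Real.exp (-s)) hβ.ne'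
  simp only [mul_zero, mul_one, smul_eq_mul] at h2
  have h3 : (∫ t in (0:ℝ)..1, (β * t) ^ (α-1) * Real.exp (-(β*t)))
      = β ^ (α-1) * ∫ t in (0:ℝ)..1, t ^ (α-1) * Real.exp (-(β*t)) := by
    rw [← intervalIntegral.integral_const_mul]
    apply intervalIntegral.integral_congr
    intro t ht
    rw [Set.uIcc_of_le zero_le_one] at ht
    have ht0 : 0 ≤ t := ht.1
    simp only
    rw [Real.mul_rpow hβ.le ht0]
    ring
  rw [h3] at h2
  unfold lGamma
  have hb1 : (0:ℝ) < β ^ (α-1) := Real.rpow_pos_of_pos hβ _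
  have h4 : (∫ t in (0:ℝ)..1, t ^ (α-1) * Real.exp (-(β*t)))
      = β⁻¹ * (β ^ (α-1))⁻¹ * ∫ s in (0:ℝ)..β, s ^ (α-1) * Real.exp (-s) := by
    field_simp at h2 ⊢
    linarith [h2]
  rw [h4]
  congr 1
  rw [← Real.rpow_neg_one β]
  rw [← Real.rpow_neg hβ.le]
  rw [← Real.rpow_add hβ]
  congr 1
  ring

lemma continuous_pexp (N : ℕ) : Continuous (pexp N) := by
  unfold pexp
  apply continuous_finset_sum
  intro k _
  exact (continuous_pow k).div_const _

/-- For a non-increasing sequence `α_N ↓ α > 0` with `(α_N - α) log N → 0` and `β_N → β > 0`,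
`lim_N N^(-α_N) Σ_{k=0}^N (Γ(α_N+k)/k!) (1-β_N/N)^k = β^(-α) Γ(α,β)`. -/
theorem tendsto_sum_gamma_ratio_varying (α β : ℝ) (a β' : ℕ → ℝ)
    (hα : 0 < α) (hβ : 0 < β)
    (ha_anti : Antitone a) (ha_ge : ∀ N, α ≤ a N)
    (ha_lim : Tendsto a atTop (nhds α))
    (ha_log : Tendsto (fun N : ℕ => (a N - α) * Real.log N) atTop (nhds 0))
    (hβ' : Tendsto β' atTop (nhds β)) :
    Tendsto (fun N : ℕ => (N : ℝ) ^ (-(a N)) *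
        ∑ k ∈ Finset.range (N + 1),
          Real.Gamma (a N + k) / (Nat.factorial k) * (1 - β' N / N) ^ k)
      atTop (nhds (β ^ (-α) * lGamma α β)) := by
  set F : ℕ → ℝ → ℝ := fun N t =>
    t ^ (a N - 1) * (Real.exp (-((N:ℝ)*t)) * pexp N ((1 - β' N / N) * N * t)) with hF_def
  set f : ℝ → ℝ :=
    Set.indicator (Set.Ioo 0 1) (fun t => t ^ (α-1) * Real.exp (-(β*t))) with hf_def
  set bound : ℝ → ℝ := fun t =>
    (t ^ (α-1) + t ^ (a 0 - 1)) * Real.exp (-(β/2 * t)) with hbound_def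
  -- eventual facts
  have hbpos : ∀ᶠ N : ℕ in atTop, β/2 < β' N :=
    hβ'.eventually (eventually_gt_nhds (by linarith))
  have hdiv : Tendsto (fun N : ℕ => β' N / N) atTop (nhds 0) :=
    hβ'.div_atTop tendsto_natCast_atTop_atTop
  have hdivlt : ∀ᶠ N : ℕ in atTop, β' N / N < 1 :=
    hdiv.eventually (eventually_lt_nhds one_pos)
  have hN1 : ∀ᶠ N : ℕ in atTop, 1 ≤ N := eventually_ge_atTop 1
  -- dominated convergence
  have hDCT : Tendsto (fun N : ℕ => ∫ t in Set.Ioi (0:ℝ), F N t) atTop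
      (nhds (∫ t in Set.Ioi (0:ℝ), f t)) := by
    apply MeasureTheory.tendsto_integral_filter_of_dominated_convergence bound
    · -- measurability
      apply Filter.Eventually.of_forall
      intro N
      apply ContinuousOn.aestronglyMeasurable _ measurableSet_Ioi
      apply ContinuousOn.mul
      · exact continuousOn_id.rpow_const (fun x hx => Or.inl (ne_of_gt hx))
      · apply Continuous.continuousOn
        exact ((Real.continuous_exp.comp (continuous_const.mul continuous_id).neg).mul
          ((continuous_pexp N).comp (continuous_const.mul continuous_id)))
    · -- bound
      filter_upwards [hbpos, hdivlt, hN1] with N h1 h2 h3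
      rw [MeasureTheory.ae_restrict_iff' measurableSet_Ioi]
      apply Filter.Eventually.of_forall
      intro t ht
      have ht0 : (0:ℝ) < t := ht
      have hN0 : (0:ℝ) < N := by exact_mod_cast h3
      have hx0 : 0 ≤ 1 - β' N / N := by linarith
      have hy0 : 0 ≤ (1 - β' N / N) * N * t := by positivity
      have hE0 : 0 ≤ Real.exp (-((N:ℝ)*t)) * pexp N ((1 - β' N / N) * N * t) :=
        mul_nonneg (Real.exp_nonneg _) (pexp_nonneg N hy0)
      have hFnn : 0 ≤ F N t := mul_nonneg (Real.rpow_nonneg ht0.le _) hE0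
      rw [Real.norm_eq_abs, abs_of_nonneg hFnn]
      have hEbd : Real.exp (-((N:ℝ)*t)) * pexp N ((1 - β' N / N) * N * t)
          ≤ Real.exp (-(β/2 * t)) := by
        calc Real.exp (-((N:ℝ)*t)) * pexp N ((1 - β' N / N) * N * t)
            ≤ Real.exp (-((N:ℝ)*t)) * Real.exp ((1 - β' N / N) * N * t) :=
              mul_le_mul_of_nonneg_left (pexp_le_exp N hy0) (Real.exp_nonneg _)
          _ = Real.exp (-(β' N * t)) := by
              rw [← Real.exp_add]
              congr 1
              have : β' N / N * N = β' N := div_mul_cancel₀ _ hN0.ne'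
              nlinarith [this]
          _ ≤ Real.exp (-(β/2 * t)) := by
              apply Real.exp_le_exp.mpr
              nlinarith
      have htpow : t ^ (a N - 1) ≤ t ^ (α-1) + t ^ (a 0 - 1) := by
        rcases le_or_gt t 1 with hle | hgt
        · have h4 : t ^ (a N - 1) ≤ t ^ (α-1) :=
            Real.rpow_le_rpow_of_exponent_ge ht0 hle (by linarith [ha_ge N])
          have h5 : 0 ≤ t ^ (a 0 - 1) := Real.rpow_nonneg ht0.le _
          linarith
        · have h4 : t ^ (a N - 1) ≤ t ^ (a 0 - 1) :=
            Real.rpow_le_rpow_of_exponent_le hgt.le (by linarith [ha_anti (Nat.zero_le N)])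
          have h5 : 0 ≤ t ^ (α - 1) := Real.rpow_nonneg ht0.le _
          linarith
      calc F N t ≤ t ^ (a N - 1) * Real.exp (-(β/2 * t)) :=
            mul_le_mul_of_nonneg_left hEbd (Real.rpow_nonneg ht0.le _)
        _ ≤ bound t := by
            apply mul_le_mul_of_nonneg_right htpow (Real.exp_nonneg _)
    · -- integrability of bound
      have hint : ∀ c : ℝ, 0 < c → IntegrableOn
          (fun t : ℝ => t ^ (c - 1) * Real.exp (-(β/2 * t))) (Set.Ioi 0) := by
        intro c hc
        have := integrableOn_rpow_mul_exp_neg_mul_rpow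
          (s := c - 1) (p := 1) (b := β/2) (by linarith) one_pos (by linarith)
        apply this.congr_fun _ measurableSet_Ioi
        intro t ht
        simp only [Real.rpow_one, neg_mul]
      have h1 := hint α hα
      have h2 := hint (a 0) (lt_of_lt_of_le hα (ha_ge 0))
      have hsum : IntegrableOn (fun t : ℝ =>
          t ^ (α-1) * Real.exp (-(β/2 * t)) + t ^ (a 0 - 1) * Real.exp (-(β/2 * t)))
          (Set.Ioi 0) volume := h1.add h2
      apply hsum.congr_fun _ measurableSet_Ioi
      intro t _
      simp only [hbound_def]
      ring
    · -- pointwise limit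
      have hone : ∀ᵐ t : ℝ ∂(volume.restrict (Set.Ioi 0)), t ≠ 1 := by
        apply ae_restrict_of_ae
        rw [MeasureTheory.ae_iff]
        have : {x : ℝ | ¬ x ≠ 1} = {1} := by ext x; simp
        rw [this]
        exact measure_singleton 1
      filter_upwards [MeasureTheory.ae_restrict_mem measurableSet_Ioi, hone] with t ht ht1
      have ht0 : (0:ℝ) < t := ht
      have hrpow : Tendsto (fun N => t ^ (a N - 1)) atTop (nhds (t ^ (α-1))) := by
        have h1 : Tendsto (fun N => Real.log t * (a N - 1)) atTop
            (nhds (Real.log t * (α - 1))) := ((ha_lim.sub_const 1).const_mul _)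
        have h2 := (Real.continuous_exp.tendsto _).comp h1
        have h3 : ∀ N, Real.exp (Real.log t * (a N - 1)) = t ^ (a N - 1) := fun N =>
          (Real.rpow_def_of_pos ht0 _).symm
        rw [show Real.exp (Real.log t * (α-1)) = t ^ (α-1) from
          (Real.rpow_def_of_pos ht0 _).symm] at h2
        exact h2.congr (fun N => h3 N)
      rcases lt_or_gt_of_ne ht1 with hlt | hgt
      · have hf_t : f t = t ^ (α-1) * Real.exp (-(β*t)) :=
          Set.indicator_of_mem (Set.mem_Ioo.mpr ⟨ht0, hlt⟩) _
        rw [hf_t]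
        exact hrpow.mul (key_lt_one hβ hβ' ht0 hlt)
      · have hf_t : f t = 0 := Set.indicator_of_notMem (by
          intro hmem
          exact absurd hmem.2 (not_lt.mpr hgt.le)) _
        rw [hf_t]
        have := hrpow.mul (key_gt_one hβ hβ' hgt)
        rwa [mul_zero] at this
  -- conclude
  rw [← limit_integral_eq hα hβ]
  refine Tendsto.congr' ?_ hDCT
  filter_upwards [hN1] with N h3
  have hc : 0 < a N := lt_of_lt_of_le hα (ha_ge N)
  exact (gamma_sum_eq (a N) (1 - β' N / N) hc N h3).symm
end

section
/- Let α > 0 and let (α_k) be a non-increasing sequence with α_k ↓ α and (α_k − α) log k → 0 as k → ∞. Then the product ∏_{s=0}^{k} (α+s)/(α_k+s) converges to 1 as k → ∞. -/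
open Real Filter Finset

/-- Sum bound: ∑_{s=0}^{k} 1/(α+s) ≤ 1/α + 1 + log k. -/
lemma sum_inv_le_aux (α : ℝ) (hα : 0 < α) (k : ℕ) :
    ∑ s ∈ Finset.range (k + 1), 1 / (α + s) ≤ 1 / α + (1 + Real.log k) := by
  rw [Finset.sum_range_succ']
  simp only [Nat.cast_zero, add_zero]
  push_cast
  have h1 : ∑ s ∈ Finset.range k, 1 / (α + ((s : ℝ) + 1))
      ≤ ∑ s ∈ Finset.range k, 1 / ((s : ℝ) + 1) := by
    apply Finset.sum_le_sum
    intro i _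
    apply one_div_le_one_div_of_le (by positivity)
    linarith [hα]
  have h2 : ∑ s ∈ Finset.range k, 1 / ((s : ℝ) + 1) = (harmonic k : ℝ) := by
    simp [harmonic, one_div]
  have h3 := harmonic_le_one_add_log k
  linarith

/-- For a non-increasing sequence of positive reals `α_k ↓ α > 0` with `(α_k - α) log k → 0`,
the product `∏_{s=0}^{k} (α+s)/(α_k+s)` converges to `1`. -/
theorem tendsto_prod_ratio_one (α : ℝ) (a : ℕ → ℝ)
    (hα : 0 < α) (ha_pos : ∀ k, 0 < a k)
    (ha_anti : Antitone a) (ha_ge : ∀ k, α ≤ a k)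
    (ha_lim : Tendsto a atTop (nhds α))
    (ha_log : Tendsto (fun k : ℕ => (a k - α) * Real.log k) atTop (nhds 0)) :
    Tendsto (fun k : ℕ => ∏ s ∈ Finset.range (k + 1), (α + s) / (a k + s))
      atTop (nhds 1) := by
  have hnum : ∀ s : ℕ, (0:ℝ) < α + s := fun s =>
    add_pos_of_pos_of_nonneg hα (Nat.cast_nonneg s)
  have hden : ∀ k s : ℕ, (0:ℝ) < a k + s := fun k s =>
    add_pos_of_pos_of_nonneg (ha_pos k) (Nat.cast_nonneg s)
  set P : ℕ → ℝ := fun k => ∏ s ∈ Finset.range (k + 1), (α + s) / (a k + s) with hP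
  have hPpos : ∀ k, 0 < P k := fun k =>
    Finset.prod_pos fun s _ => div_pos (hnum s) (hden k s)
  -- upper bound : P k ≤ 1
  have hupper : ∀ k, P k ≤ 1 := by
    intro k
    apply Finset.prod_le_one
    · intro s _; exact le_of_lt (div_pos (hnum s) (hden k s))
    · intro s _
      apply div_le_one_of_le₀
      · linarith [ha_ge k]
      · exact (hden k s).le
  -- lower bound
  set L : ℕ → ℝ := fun k => Real.exp (-((a k - α) * (1 / α + (1 + Real.log k)))) with hL
  have hlower : ∀ k, L k ≤ P k := by
    intro k
    rw [← Real.exp_log (hPpos k), Real.exp_le_exp, Real.log_prod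
      (fun s _ => ne_of_gt (div_pos (hnum s) (hden k s)))]
    have hterm : ∀ s ∈ Finset.range (k + 1),
        -((a k - α) * (1 / (α + s))) ≤ Real.log ((α + s) / (a k + s)) := by
      intro s _
      rw [Real.log_div (ne_of_gt (hnum s)) (ne_of_gt (hden k s))]
      have h1 : Real.log (a k + s) - Real.log (α + s) ≤ (a k - α) / (α + s) := by
        have := Real.log_le_sub_one_of_pos (div_pos (hden k s) (hnum s))
        rw [Real.log_div (ne_of_gt (hden k s)) (ne_of_gt (hnum s))] at this
        have heq : (a k + s) / (α + s) - 1 = (a k - α) / (α + s) := by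
          field_simp
          ring
        linarith [this, heq ▸ this]
      rw [div_eq_mul_one_div] at h1
      linarith
    calc -((a k - α) * (1 / α + (1 + Real.log k)))
        ≤ -((a k - α) * ∑ s ∈ Finset.range (k + 1), 1 / (α + s)) := by
          apply neg_le_neg
          apply mul_le_mul_of_nonneg_left (sum_inv_le_aux α hα k)
          linarith [ha_ge k]
      _ = ∑ s ∈ Finset.range (k + 1), -((a k - α) * (1 / (α + s))) := by
          rw [Finset.mul_sum, ← Finset.sum_neg_distrib]
      _ ≤ _ := Finset.sum_le_sum hterm
  -- L tends to 1
  have hd : Tendsto (fun k => a k - α) atTop (nhds 0) := by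
    exact tendsto_sub_nhds_zero_iff.mpr ha_lim
  have hLlim : Tendsto L atTop (nhds 1) := by
    have h1 : Tendsto (fun k : ℕ => (a k - α) * (1 / α + (1 + Real.log k)))
        atTop (nhds 0) := by
      have : Tendsto (fun k : ℕ => (a k - α) * (1 / α + 1) + (a k - α) * Real.log k)
          atTop (nhds 0) := by
        have := (hd.mul_const (1 / α + 1)).add ha_log
        simpa using this
      convert this using 2 with k
      ring
    have := (h1.neg).comp (tendsto_id (α := ℕ))
    simpa [hL, Function.comp_def] using Real.tendsto_exp_nhds_zero_nhds_one.comp (by simpa using h1.neg)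
  exact tendsto_of_tendsto_of_tendsto_of_le_of_le hLlim tendsto_const_nhds
    (fun k => hlower k) (fun k => hupper k)
end

section
/- For fixed α, β > 0, the Riemann sums N^{-α} Σ_{k=k(N)+1}^{N} k^{α-1} e^{-kβ/N} converge to β^{-α} Γ(α,β) as N → ∞, where k(N) = ⌊δ log N⌋ for any fixed δ with 0 < δ < α. -/
open MeasureTheory Real Filter Finset

private lemma f_intable {α : ℝ} (hα : 0 < α) (β a b : ℝ) :
    IntervalIntegrable (fun x : ℝ => x ^ (α - 1) * Real.exp (-(β * x))) volume a b :=
  (intervalIntegral.intervalIntegrable_rpow' (by linarith)).mul_continuousOn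
    ((Real.continuous_exp.comp (by continuity)).continuousOn)


private lemma ptwise {α β x y u ε : ℝ} (hβ : 0 ≤ β) (hx : 0 < x) (hxy : x ≤ y)
    (hyu : y ≤ u * x) (hyx : y - x ≤ ε) (hu : 1 ≤ u) :
    Real.exp (-(β * ε)) * min 1 (u ^ (α - 1)) * (x ^ (α - 1) * Real.exp (-(β * x)))
      ≤ y ^ (α - 1) * Real.exp (-(β * y)) ∧
    y ^ (α - 1) * Real.exp (-(β * y))
      ≤ max 1 (u ^ (α - 1)) * (x ^ (α - 1) * Real.exp (-(β * x))) := by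
  set t : ℝ := y / x with ht
  have ht1 : 1 ≤ t := (one_le_div hx).mpr hxy
  have htu : t ≤ u := (div_le_iff₀ hx).mpr (by linarith [hyu])
  have hy : y = t * x := (div_mul_cancel₀ y hx.ne').symm
  have hty : y ^ (α - 1) = t ^ (α - 1) * x ^ (α - 1) := by
    rw [hy, Real.mul_rpow (by linarith) hx.le]
  have hey : Real.exp (-(β * y)) = Real.exp (-(β * (y - x))) * Real.exp (-(β * x)) := by
    rw [← Real.exp_add]; ring_nf
  have htl : min 1 (u ^ (α - 1)) ≤ t ^ (α - 1) ∧ t ^ (α - 1) ≤ max 1 (u ^ (α - 1)) := by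
    rcases le_or_gt 0 (α - 1) with h | h
    · exact ⟨(min_le_left _ _).trans (Real.one_le_rpow ht1 h),
        le_max_of_le_right (Real.rpow_le_rpow (by linarith) htu h)⟩
    · exact ⟨(min_le_right _ _).trans (Real.rpow_le_rpow_of_nonpos (by linarith) htu h.le),
        le_max_of_le_left (Real.rpow_le_one_of_one_le_of_nonpos ht1 h.le)⟩
  have hel : Real.exp (-(β * ε)) ≤ Real.exp (-(β * (y - x))) ∧
      Real.exp (-(β * (y - x))) ≤ 1 := by
    constructor
    · exact Real.exp_le_exp.mpr (by nlinarith)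
    · rw [← Real.exp_zero]; exact Real.exp_le_exp.mpr (by nlinarith)
  constructor
  · rw [hty, hey]
    calc Real.exp (-(β * ε)) * min 1 (u ^ (α - 1)) * (x ^ (α - 1) * Real.exp (-(β * x)))
        ≤ Real.exp (-(β * (y - x))) * (t ^ (α - 1)) * (x ^ (α - 1) * Real.exp (-(β * x))) := by
          apply mul_le_mul _ le_rfl (by positivity) (by positivity)
          exact mul_le_mul hel.1 htl.1 (le_min (by norm_num) (by positivity)) (Real.exp_pos _).le
      _ = t ^ (α - 1) * x ^ (α - 1) * (Real.exp (-(β * (y - x))) * Real.exp (-(β * x))) := by ring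
  · rw [hty, hey]
    calc t ^ (α - 1) * x ^ (α - 1) * (Real.exp (-(β * (y - x))) * Real.exp (-(β * x)))
        ≤ max 1 (u ^ (α - 1)) * x ^ (α - 1) * (1 * Real.exp (-(β * x))) := by
          apply mul_le_mul (mul_le_mul htl.2 le_rfl (by positivity) (by positivity))
            (mul_le_mul hel.2 le_rfl (Real.exp_pos _).le one_pos.le) (by positivity) (by positivity)
      _ = max 1 (u ^ (α - 1)) * (x ^ (α - 1) * Real.exp (-(β * x))) := by ring

private lemma interval_bound {α β : ℝ} (hα : 0 < α) (hβ : 0 < β) {m N j : ℕ}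
    (hm : 1 ≤ m) (hjm : m ≤ j) (hN : 1 ≤ N) :
    Real.exp (-(β * (1 / (N : ℝ)))) * min 1 ((1 + 1 / (m : ℝ)) ^ (α - 1)) *
        ∫ x in ((j : ℝ) / N)..(((j : ℝ) + 1) / N), x ^ (α - 1) * Real.exp (-(β * x))
      ≤ (1 / (N : ℝ)) * ((((j : ℝ) + 1) / N) ^ (α - 1) *
          Real.exp (-(β * (((j : ℝ) + 1) / N)))) ∧
    (1 / (N : ℝ)) * ((((j : ℝ) + 1) / N) ^ (α - 1) *
          Real.exp (-(β * (((j : ℝ) + 1) / N))))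
      ≤ max 1 ((1 + 1 / (m : ℝ)) ^ (α - 1)) *
        ∫ x in ((j : ℝ) / N)..(((j : ℝ) + 1) / N), x ^ (α - 1) * Real.exp (-(β * x)) := by
  have hNR : (0 : ℝ) < N := by exact_mod_cast hN
  have hmR : (0 : ℝ) < m := by exact_mod_cast hm
  have hjR : (0 : ℝ) < j := by exact_mod_cast hm.trans hjm
  have hjmR : (m : ℝ) ≤ j := by exact_mod_cast hjm
  have hab : (j : ℝ) / N ≤ ((j : ℝ) + 1) / N := by gcongr; linarith
  have hpt : ∀ x ∈ Set.Icc ((j : ℝ) / N) (((j : ℝ) + 1) / N),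
      (Real.exp (-(β * (1 / (N : ℝ)))) * min 1 ((1 + 1 / (m : ℝ)) ^ (α - 1)) *
          (x ^ (α - 1) * Real.exp (-(β * x)))
        ≤ (((j : ℝ) + 1) / N) ^ (α - 1) * Real.exp (-(β * (((j : ℝ) + 1) / N)))) ∧
      ((((j : ℝ) + 1) / N) ^ (α - 1) * Real.exp (-(β * (((j : ℝ) + 1) / N)))
        ≤ max 1 ((1 + 1 / (m : ℝ)) ^ (α - 1)) * (x ^ (α - 1) * Real.exp (-(β * x)))) := by
    intro x hx
    have hx0 : 0 < x := lt_of_lt_of_le (by positivity) hx.1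
    apply ptwise hβ.le hx0 hx.2
    · have h1 : 1 / (j : ℝ) ≤ 1 / m := one_div_le_one_div_of_le hmR hjmR
      have h2 : (1 + 1 / (j : ℝ)) * ((j : ℝ) / N) = ((j : ℝ) + 1) / N := by
        field_simp
      have h3 : (1 + 1 / (j : ℝ)) * ((j : ℝ) / N) ≤ (1 + 1 / (m : ℝ)) * x :=
        mul_le_mul (by linarith) hx.1 (by positivity) (by positivity)
      linarith
    · have h4 : (j : ℝ) / N ≤ x := hx.1
      have h5 : ((j : ℝ) + 1) / N - (j : ℝ) / N = 1 / N := by ring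
      linarith
    · have : 0 < 1 / (m : ℝ) := by positivity
      linarith
  have hint := f_intable hα β ((j : ℝ) / N) (((j : ℝ) + 1) / N)
  have he : (((j : ℝ) + 1) / N - (j : ℝ) / N) = 1 / (N : ℝ) := by ring
  constructor
  · calc Real.exp (-(β * (1 / (N : ℝ)))) * min 1 ((1 + 1 / (m : ℝ)) ^ (α - 1)) *
        ∫ x in ((j : ℝ) / N)..(((j : ℝ) + 1) / N), x ^ (α - 1) * Real.exp (-(β * x))
        = ∫ x in ((j : ℝ) / N)..(((j : ℝ) + 1) / N),
            Real.exp (-(β * (1 / (N : ℝ)))) * min 1 ((1 + 1 / (m : ℝ)) ^ (α - 1)) *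
              (x ^ (α - 1) * Real.exp (-(β * x))) := by
          rw [intervalIntegral.integral_const_mul]
      _ ≤ ∫ _x in ((j : ℝ) / N)..(((j : ℝ) + 1) / N),
            (((j : ℝ) + 1) / N) ^ (α - 1) * Real.exp (-(β * (((j : ℝ) + 1) / N))) :=
          intervalIntegral.integral_mono_on hab (hint.const_mul _)
            intervalIntegrable_const (fun x hx => (hpt x hx).1)
      _ = (1 / (N : ℝ)) * ((((j : ℝ) + 1) / N) ^ (α - 1) *
            Real.exp (-(β * (((j : ℝ) + 1) / N)))) := by
          rw [intervalIntegral.integral_const, he, smul_eq_mul]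
  · calc (1 / (N : ℝ)) * ((((j : ℝ) + 1) / N) ^ (α - 1) *
            Real.exp (-(β * (((j : ℝ) + 1) / N))))
        = ∫ _x in ((j : ℝ) / N)..(((j : ℝ) + 1) / N),
            (((j : ℝ) + 1) / N) ^ (α - 1) * Real.exp (-(β * (((j : ℝ) + 1) / N))) := by
          rw [intervalIntegral.integral_const, he, smul_eq_mul]
      _ ≤ ∫ x in ((j : ℝ) / N)..(((j : ℝ) + 1) / N),
            max 1 ((1 + 1 / (m : ℝ)) ^ (α - 1)) * (x ^ (α - 1) * Real.exp (-(β * x))) :=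
          intervalIntegral.integral_mono_on hab intervalIntegrable_const
            (hint.const_mul _) (fun x hx => (hpt x hx).2)
      _ = max 1 ((1 + 1 / (m : ℝ)) ^ (α - 1)) *
            ∫ x in ((j : ℝ) / N)..(((j : ℝ) + 1) / N), x ^ (α - 1) * Real.exp (-(β * x)) := by
          rw [intervalIntegral.integral_const_mul]

private lemma sum_Ioc_shift {M : Type*} [AddCommMonoid M] (G : ℕ → M) (m N : ℕ) :
    ∑ k ∈ Finset.Ioc m N, G k = ∑ j ∈ Finset.Ico m N, G (j + 1) := by
  rw [← Finset.Ico_add_one_add_one_eq_Ioc, Finset.sum_Ico_eq_sum_range, Finset.sum_Ico_eq_sum_range,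
    Nat.add_sub_add_right]
  exact Finset.sum_congr rfl fun i _ => by rw [show m + 1 + i = m + i + 1 from by omega]

/-- For fixed `α, β > 0` and `0 < δ < α`, with `k(N) = ⌊δ log N⌋`, the Riemann sums
`N^(-α) Σ_{k=k(N)+1}^{N} k^(α-1) e^(-kβ/N)` converge to `β^(-α) Γ(α,β)`. -/
theorem tendsto_riemann_sum (α β δ : ℝ) (hβ : 0 < β) (hδ : 0 < δ) (hδα : δ < α) :
    Tendsto (fun N : ℕ => (N : ℝ) ^ (-α) *
        ∑ k ∈ Finset.Ioc (⌊δ * Real.log N⌋₊) N,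
          (k : ℝ) ^ (α - 1) * Real.exp (-((k : ℝ) * β / N)))
      atTop (nhds (β ^ (-α) * lGamma α β)) := by
  have hα : 0 < α := hδ.trans hδα
  set f : ℝ → ℝ := fun x => x ^ (α - 1) * Real.exp (-(β * x)) with hfdef
  set K : ℝ := ∫ x in (0:ℝ)..(1:ℝ), f x with hKdef
  have hfi : ∀ a b : ℝ, IntervalIntegrable f volume a b := fun a b => f_intable hα β a b
  -- value identity
  have hKval : β ^ (-α) * lGamma α β = K := by
    have h1 : (β * ∫ x in (0:ℝ)..(1:ℝ), (β * x) ^ (α - 1) * Real.exp (-(β * x)))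
        = ∫ s in (0:ℝ)..β, s ^ (α - 1) * Real.exp (-s) := by
      have := intervalIntegral.mul_integral_comp_mul_left (a := (0:ℝ)) (b := 1)
        (f := fun s => s ^ (α - 1) * Real.exp (-s)) β
      simpa using this
    have h2 : (∫ x in (0:ℝ)..(1:ℝ), (β * x) ^ (α - 1) * Real.exp (-(β * x)))
        = β ^ (α - 1) * K := by
      rw [hKdef, ← intervalIntegral.integral_const_mul]
      apply intervalIntegral.integral_congr
      intro x hx
      rw [Set.uIcc_of_le (by norm_num : (0:ℝ) ≤ 1)] at hx
      simp only [hfdef]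
      rw [Real.mul_rpow hβ.le hx.1]
      ring
    have hb0 : β ^ α ≠ 0 := (Real.rpow_pos_of_pos hβ α).ne'
    rw [lGamma, ← h1, h2, Real.rpow_neg hβ.le, Real.rpow_sub hβ, Real.rpow_one]
    field_simp
  rw [hKval]
  -- limits
  have hm_top : Tendsto (fun N : ℕ => ⌊δ * Real.log N⌋₊) atTop atTop :=
    tendsto_nat_floor_atTop.comp
      ((Real.tendsto_log_atTop.const_mul_atTop hδ).comp tendsto_natCast_atTop_atTop)
  have hlog_div : Tendsto (fun N : ℕ => δ * Real.log N / N) atTop (nhds 0) := by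
    have h := Real.tendsto_pow_log_div_mul_add_atTop 1 0 1 one_ne_zero
    simp only [pow_one, one_mul, add_zero] at h
    have h2 : Tendsto (fun N : ℕ => Real.log N / N) atTop (nhds 0) :=
      h.comp tendsto_natCast_atTop_atTop
    have h3 := h2.const_mul δ
    simpa [mul_div_assoc] using h3
  have ha0 : Tendsto (fun N : ℕ => (⌊δ * Real.log N⌋₊ : ℝ) / N) atTop (nhds 0) := by
    apply tendsto_of_tendsto_of_tendsto_of_le_of_le' tendsto_const_nhds hlog_div
    · filter_upwards with N; positivity
    · filter_upwards [eventually_ge_atTop 1] with N hN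
      have hNR : (0 : ℝ) < N := by exact_mod_cast hN
      have hl : 0 ≤ δ * Real.log N :=
        mul_nonneg hδ.le (Real.log_nonneg (by exact_mod_cast hN))
      exact div_le_div_of_nonneg_right (Nat.floor_le hl) hNR.le
  have hev : ∀ᶠ N : ℕ in atTop,
      1 ≤ ⌊δ * Real.log N⌋₊ ∧ ⌊δ * Real.log N⌋₊ < N ∧ 1 ≤ N := by
    filter_upwards [hm_top.eventually_ge_atTop 1,
      ha0.eventually (gt_mem_nhds one_pos), eventually_ge_atTop 1] with N ha hb hc
    refine ⟨ha, ?_, hc⟩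
    have hNR : (0 : ℝ) < N := by exact_mod_cast hc
    exact_mod_cast (div_lt_one hNR).mp hb
  have hsmall : Tendsto (fun N : ℕ => ∫ x in (0:ℝ)..((⌊δ * Real.log N⌋₊ : ℝ) / N), f x)
      atTop (nhds 0) := by
    have hup : Tendsto (fun N : ℕ => ((⌊δ * Real.log N⌋₊ : ℝ) / N) ^ α / α)
        atTop (nhds 0) := by
      have h := (Real.continuousAt_rpow_const 0 α (Or.inr hα.le)).tendsto.comp ha0
      simp only [Function.comp_def, Real.zero_rpow hα.ne'] at h
      simpa using h.div_const α
    apply tendsto_of_tendsto_of_tendsto_of_le_of_le' tendsto_const_nhds hup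
    · filter_upwards with N
      apply intervalIntegral.integral_nonneg (by positivity)
      intro x hx
      exact mul_nonneg (Real.rpow_nonneg hx.1 _) (Real.exp_pos _).le
    · filter_upwards with N
      have haN : (0:ℝ) ≤ (⌊δ * Real.log N⌋₊ : ℝ) / N := by positivity
      have hmono : (∫ x in (0:ℝ)..((⌊δ * Real.log N⌋₊ : ℝ) / N), f x)
          ≤ ∫ x in (0:ℝ)..((⌊δ * Real.log N⌋₊ : ℝ) / N), x ^ (α - 1) := by
        apply intervalIntegral.integral_mono_on haN (hfi _ _)
          (intervalIntegral.intervalIntegrable_rpow' (by linarith))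
        intro x hx
        apply mul_le_of_le_one_right (Real.rpow_nonneg hx.1 _)
        rw [Real.exp_le_one_iff]
        nlinarith [hx.1]
      have hval : (∫ x in (0:ℝ)..((⌊δ * Real.log N⌋₊ : ℝ) / N), x ^ (α - 1))
          = ((⌊δ * Real.log N⌋₊ : ℝ) / N) ^ α / α := by
        rw [integral_rpow (Or.inl (by linarith : (-1:ℝ) < α - 1))]
        rw [show α - 1 + 1 = α from by ring, Real.zero_rpow hα.ne', sub_zero]
      linarith [hmono, hval.le, hval.ge]
  have hJ : Tendsto (fun N : ℕ => ∫ x in ((⌊δ * Real.log N⌋₊ : ℝ) / N)..(1:ℝ), f x)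
      atTop (nhds K) := by
    have heq : ∀ N : ℕ, (∫ x in ((⌊δ * Real.log N⌋₊ : ℝ) / N)..(1:ℝ), f x)
        = K - ∫ x in (0:ℝ)..((⌊δ * Real.log N⌋₊ : ℝ) / N), f x := by
      intro N
      have h := intervalIntegral.integral_add_adjacent_intervals
        (hfi 0 ((⌊δ * Real.log N⌋₊ : ℝ) / N)) (hfi ((⌊δ * Real.log N⌋₊ : ℝ) / N) 1)
      rw [hKdef]
      linarith [h]
    simp only [heq]
    simpa using tendsto_const_nhds.sub hsmall
  have h1div : Tendsto (fun N : ℕ => 1 / (⌊δ * Real.log N⌋₊ : ℝ)) atTop (nhds 0) :=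
    tendsto_one_div_atTop_nhds_zero_nat.comp hm_top
  have hbase : Tendsto (fun N : ℕ => (1 + 1 / (⌊δ * Real.log N⌋₊ : ℝ)) ^ (α - 1))
      atTop (nhds 1) := by
    have h2 : Tendsto (fun N : ℕ => 1 + 1 / (⌊δ * Real.log N⌋₊ : ℝ)) atTop (nhds 1) := by
      simpa using tendsto_const_nhds.add h1div
    have h3 := (Real.continuousAt_rpow_const 1 (α - 1) (Or.inl one_ne_zero)).tendsto.comp h2
    simpa [Function.comp_def, Real.one_rpow] using h3
  have hexp : Tendsto (fun N : ℕ => Real.exp (-(β * (1 / (N : ℝ))))) atTop (nhds 1) := by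
    have h1 : Tendsto (fun N : ℕ => -(β * (1 / (N : ℝ)))) atTop (nhds 0) := by
      simpa using (tendsto_one_div_atTop_nhds_zero_nat.const_mul β).neg
    simpa [Function.comp_def] using (Real.continuous_exp.tendsto 0).comp h1
  have hc : Tendsto (fun N : ℕ => Real.exp (-(β * (1 / (N : ℝ)))) *
      min 1 ((1 + 1 / (⌊δ * Real.log N⌋₊ : ℝ)) ^ (α - 1))) atTop (nhds 1) := by
    have := hexp.mul ((tendsto_const_nhds (x := (1:ℝ))).min hbase)
    simpa using this
  have hC : Tendsto (fun N : ℕ => max 1 ((1 + 1 / (⌊δ * Real.log N⌋₊ : ℝ)) ^ (α - 1)))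
      atTop (nhds 1) := by
    have := (tendsto_const_nhds (x := (1:ℝ))).max hbase
    simpa using this
  -- key eventual bounds
  have hkey : ∀ᶠ N : ℕ in atTop,
      (Real.exp (-(β * (1 / (N : ℝ)))) *
          min 1 ((1 + 1 / (⌊δ * Real.log N⌋₊ : ℝ)) ^ (α - 1))) *
        (∫ x in ((⌊δ * Real.log N⌋₊ : ℝ) / N)..(1:ℝ), f x)
        ≤ (N : ℝ) ^ (-α) * ∑ k ∈ Finset.Ioc (⌊δ * Real.log N⌋₊) N,
            (k : ℝ) ^ (α - 1) * Real.exp (-((k : ℝ) * β / N)) ∧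
      (N : ℝ) ^ (-α) * ∑ k ∈ Finset.Ioc (⌊δ * Real.log N⌋₊) N,
            (k : ℝ) ^ (α - 1) * Real.exp (-((k : ℝ) * β / N))
        ≤ (max 1 ((1 + 1 / (⌊δ * Real.log N⌋₊ : ℝ)) ^ (α - 1))) *
        (∫ x in ((⌊δ * Real.log N⌋₊ : ℝ) / N)..(1:ℝ), f x) := by
    filter_upwards [hev] with N hN
    obtain ⟨h1, h2, h3⟩ := hN
    have hNR : (0 : ℝ) < N := by exact_mod_cast h3
    have hNα : (N : ℝ) ^ α ≠ 0 := (Real.rpow_pos_of_pos hNR α).ne'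
    have hsum : (N : ℝ) ^ (-α) * ∑ k ∈ Finset.Ioc (⌊δ * Real.log N⌋₊) N,
          (k : ℝ) ^ (α - 1) * Real.exp (-((k : ℝ) * β / N))
        = ∑ j ∈ Finset.Ico (⌊δ * Real.log N⌋₊) N, (1 / (N : ℝ)) * f (((j : ℝ) + 1) / N) := by
      rw [Finset.mul_sum, sum_Ioc_shift]
      apply Finset.sum_congr rfl
      intro j _
      push_cast
      simp only [hfdef]
      rw [Real.div_rpow (by positivity) hNR.le,
        show β * (((j : ℝ) + 1) / N) = ((j : ℝ) + 1) * β / N from by ring,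
        Real.rpow_neg hNR.le, Real.rpow_sub hNR, Real.rpow_one]
      field_simp
    have hJsum : (∫ x in ((⌊δ * Real.log N⌋₊ : ℝ) / N)..(1:ℝ), f x)
        = ∑ j ∈ Finset.Ico (⌊δ * Real.log N⌋₊) N,
            ∫ x in ((j : ℝ) / N)..(((j : ℝ) + 1) / N), f x := by
      have h := intervalIntegral.sum_integral_adjacent_intervals_Ico
        (a := fun j : ℕ => (j : ℝ) / N) (μ := volume) (f := f) h2.le
        (fun k _ => hfi _ _)
      push_cast at h
      rw [div_self hNR.ne'] at h
      exact h.symm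
    constructor
    · rw [hsum, hJsum, Finset.mul_sum]
      apply Finset.sum_le_sum
      intro j hj
      exact (interval_bound hα hβ h1 (Finset.mem_Ico.mp hj).1 h3).1
    · rw [hsum, hJsum, Finset.mul_sum]
      apply Finset.sum_le_sum
      intro j hj
      exact (interval_bound hα hβ h1 (Finset.mem_Ico.mp hj).1 h3).2
  have hlow := hc.mul hJ
  have hup := hC.mul hJ
  rw [one_mul] at hlow hup
  exact tendsto_of_tendsto_of_tendsto_of_le_of_le' hlow hup
    (hkey.mono fun N h => h.1) (hkey.mono fun N h => h.2)
end

section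
/- For any α > 0 and δ with 0 < δ < α, with k(N) = ⌊δ log N⌋, the tail estimate N^{-α} Σ_{k=0}^{k(N)} Γ(α+k)/k! → 0 as N → ∞ holds. -/
open Real Filter Finset

lemma gamma_add_nat_le_aux (α : ℝ) (hα : 0 < α) (k : ℕ) :
    Real.Gamma (α + k) ≤ (α + k) ^ k * Real.Gamma α := by
  induction k with
  | zero => simp
  | succ n ih =>
    have hpos : (0:ℝ) < α + n := by positivity
    have h1 : α + ((n : ℕ) + 1 : ℕ) = (α + (n : ℕ)) + 1 := by push_cast; ring
    rw [h1, Real.Gamma_add_one (by positivity)]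
    push_cast
    calc (α + n) * Real.Gamma (α + n)
        ≤ (α + n) * ((α + n) ^ n * Real.Gamma α) :=
          mul_le_mul_of_nonneg_left ih hpos.le
      _ = (α + n) ^ (n + 1) * Real.Gamma α := by ring
      _ ≤ (α + n + 1) ^ (n + 1) * Real.Gamma α := by
          apply mul_le_mul_of_nonneg_right _ (Real.Gamma_nonneg_of_nonneg hα.le)
          apply pow_le_pow_left₀ hpos.le
          linarith

/-- For `0 < δ < α` and `k(N) = ⌊δ log N⌋`, the tail estimate
`N^(-α) Σ_{k=0}^{k(N)} Γ(α+k)/k! → 0` as `N → ∞`. -/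
theorem tendsto_head_sum_zero (α δ : ℝ) (hα : 0 < α) (hδ : 0 < δ) (hδα : δ < α) :
    Tendsto (fun N : ℕ => (N : ℝ) ^ (-α) *
        ∑ k ∈ Finset.range (⌊δ * Real.log N⌋₊ + 1),
          Real.Gamma (α + k) / (Nat.factorial k))
      atTop (nhds 0) := by
  have hexp1 : (1:ℝ) < Real.exp 1 := by
    have := Real.add_one_lt_exp (one_ne_zero); linarith
  set C : ℝ := Real.Gamma α * Real.exp α * Real.exp 1 / (Real.exp 1 - 1) with hCdef
  have hΓpos : 0 < Real.Gamma α := Real.Gamma_pos_of_pos hα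
  have hC0 : 0 ≤ C := by
    apply div_nonneg (by positivity) (by linarith)
  -- term bound
  have hterm : ∀ k : ℕ, Real.Gamma (α + k) / (Nat.factorial k) ≤
      Real.Gamma α * Real.exp α * Real.exp 1 ^ k := by
    intro k
    have h1 : Real.Gamma (α + k) / (Nat.factorial k) ≤
        Real.Gamma α * ((α + k) ^ k / (Nat.factorial k)) := by
      rw [show Real.Gamma α * ((α + k) ^ k / (Nat.factorial k)) =
        ((α + k) ^ k * Real.Gamma α) / (Nat.factorial k) by ring]
      exact (div_le_div_iff_of_pos_right (by positivity)).mpr (gamma_add_nat_le_aux α hα k)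
    have h2 : (α + k) ^ k / (Nat.factorial k) ≤ Real.exp (α + k) :=
      Real.pow_div_factorial_le_exp (x := α + k) (by positivity) k
    calc Real.Gamma (α + k) / (Nat.factorial k)
        ≤ Real.Gamma α * ((α + k) ^ k / (Nat.factorial k)) := h1
      _ ≤ Real.Gamma α * Real.exp (α + k) :=
          mul_le_mul_of_nonneg_left h2 hΓpos.le
      _ = Real.Gamma α * Real.exp α * Real.exp 1 ^ k := by
          rw [Real.exp_add, ← Real.exp_one_pow]; ring
  -- bound for N ≥ 1
  have hbound : ∀ N : ℕ, (N : ℝ) ^ (-α) *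
      ∑ k ∈ Finset.range (⌊δ * Real.log N⌋₊ + 1),
        Real.Gamma (α + k) / (Nat.factorial k) ≤ C * (N : ℝ) ^ (δ - α) := by
    intro N
    rcases Nat.eq_zero_or_pos N with rfl | hN
    · simp only [Nat.cast_zero]
      rw [Real.zero_rpow (by linarith), Real.zero_rpow (by intro h; linarith [h] : δ - α ≠ 0)]
      simp
    · have hN1 : (1:ℝ) ≤ (N:ℝ) := by exact_mod_cast hN
      have hNpos : (0:ℝ) < N := by linarith
      set K := ⌊δ * Real.log N⌋₊ with hK
      have hlog0 : 0 ≤ δ * Real.log N := by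
        apply mul_nonneg hδ.le (Real.log_nonneg hN1)
      have hKle : (K : ℝ) ≤ δ * Real.log N := Nat.floor_le hlog0
      have hNα0 : 0 ≤ (N:ℝ) ^ (-α) := Real.rpow_nonneg hNpos.le _
      -- sum of geometric
      have hgeom : ∑ k ∈ Finset.range (K + 1), Real.exp 1 ^ k ≤
          Real.exp 1 ^ (K + 1) / (Real.exp 1 - 1) := by
        rw [geom_sum_eq (by linarith : Real.exp 1 ≠ 1)]
        exact (div_le_div_iff_of_pos_right (by linarith)).mpr (by linarith)
      have hpow : Real.exp 1 ^ (K + 1) ≤ Real.exp 1 * (N:ℝ) ^ δ := by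
        rw [← Real.exp_nat_mul, mul_one]
        have : ((K + 1 : ℕ) : ℝ) ≤ δ * Real.log N + 1 := by push_cast; linarith
        calc Real.exp ((K + 1 : ℕ) : ℝ) ≤ Real.exp (δ * Real.log N + 1) :=
              Real.exp_le_exp.mpr this
          _ = Real.exp 1 * (N:ℝ) ^ δ := by
              rw [Real.exp_add, Real.rpow_def_of_pos hNpos]; ring_nf
      calc (N : ℝ) ^ (-α) * ∑ k ∈ Finset.range (K + 1),
            Real.Gamma (α + k) / (Nat.factorial k)
          ≤ (N : ℝ) ^ (-α) * ∑ k ∈ Finset.range (K + 1),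
            Real.Gamma α * Real.exp α * Real.exp 1 ^ k := by
            apply mul_le_mul_of_nonneg_left _ hNα0
            exact Finset.sum_le_sum fun k _ => hterm k
        _ = (N : ℝ) ^ (-α) * (Real.Gamma α * Real.exp α *
            ∑ k ∈ Finset.range (K + 1), Real.exp 1 ^ k) := by
            rw [← Finset.mul_sum]
        _ ≤ (N : ℝ) ^ (-α) * (Real.Gamma α * Real.exp α *
            (Real.exp 1 ^ (K + 1) / (Real.exp 1 - 1))) := by
            apply mul_le_mul_of_nonneg_left _ hNα0
            exact mul_le_mul_of_nonneg_left hgeom (by positivity)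
        _ ≤ (N : ℝ) ^ (-α) * (Real.Gamma α * Real.exp α *
            (Real.exp 1 * (N:ℝ) ^ δ / (Real.exp 1 - 1))) := by
            apply mul_le_mul_of_nonneg_left _ hNα0
            apply mul_le_mul_of_nonneg_left _ (by positivity)
            exact (div_le_div_iff_of_pos_right (by linarith)).mpr hpow
        _ = C * ((N:ℝ) ^ (-α) * (N:ℝ) ^ δ) := by rw [hCdef]; ring
        _ = C * (N : ℝ) ^ (δ - α) := by
            rw [← Real.rpow_add hNpos]; ring_nf
  -- squeeze
  have hnonneg : ∀ N : ℕ, 0 ≤ (N : ℝ) ^ (-α) *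
      ∑ k ∈ Finset.range (⌊δ * Real.log N⌋₊ + 1),
        Real.Gamma (α + k) / (Nat.factorial k) := by
    intro N
    apply mul_nonneg (Real.rpow_nonneg (Nat.cast_nonneg N) _)
    apply Finset.sum_nonneg
    intro k _
    apply div_nonneg (Real.Gamma_nonneg_of_nonneg (by positivity)) (by positivity)
  have hg : Tendsto (fun N : ℕ => C * (N : ℝ) ^ (δ - α)) atTop (nhds 0) := by
    rw [show (0:ℝ) = C * 0 by ring]
    apply Tendsto.const_mul
    have h1 : Tendsto (fun x : ℝ => x ^ (-(α - δ))) atTop (nhds 0) :=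
      tendsto_rpow_neg_atTop (by linarith)
    have h2 := h1.comp tendsto_natCast_atTop_atTop (α := ℕ)
    simpa [Function.comp_def, neg_sub] using h2
  exact squeeze_zero hnonneg hbound hg
end

section
/- Let α > 0 and let (α_k) be a non-increasing sequence of positive reals with α_k ↓ α and (α_k − α) log k → 0. Then Γ(α_k + k)/(k! · k^{α_k - 1}) → 1 as k → ∞. -/
open Real Filter Finset

private lemma gamma_add_nat' {x : ℝ} (hx : 0 < x) (n : ℕ) :
    Real.Gamma (x + n) = Real.Gamma x * ∏ s ∈ Finset.range n, (x + s) := by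
  induction n with
  | zero => simp
  | succ n ih =>
    have h1 : x + ((n : ℕ) + 1 : ℕ) = (x + n) + 1 := by push_cast; ring
    rw [h1, Real.Gamma_add_one (by positivity), Finset.prod_range_succ, ih]
    push_cast; ring

/-- Gauss's classical formula in the form `Γ(α+k)/(k! k^(α-1)) → 1`. -/
private lemma gauss_classical {α : ℝ} (hα : 0 < α) :
    Tendsto (fun k : ℕ => Real.Gamma (α + k) / (Nat.factorial k * (k : ℝ) ^ (α - 1)))
      atTop (nhds 1) := by
  have hΓ : Real.Gamma α ≠ 0 := (Real.Gamma_pos_of_pos hα).ne'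
  have hmain : Tendsto
      (fun k : ℕ => Real.Gamma α * ((k : ℝ) / ((k : ℝ) + α)) / Real.GammaSeq α k)
      atTop (nhds 1) := by
    have h1 := (tendsto_const_nhds (x := Real.Gamma α)).mul
      (tendsto_natCast_div_add_atTop (𝕜 := ℝ) α)
    have h2 := (h1.div (Real.GammaSeq_tendsto_Gamma α) hΓ)
    simpa [div_self hΓ, Pi.div_def] using h2
  refine hmain.congr' ?_
  filter_upwards [eventually_ge_atTop 1] with k hk
  have hk0 : (0 : ℝ) < (k : ℝ) := by exact_mod_cast hk
  have hprod : ∀ m : ℕ, (0 : ℝ) < ∏ j ∈ Finset.range m, (α + j) :=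
    fun m => Finset.prod_pos fun j _ => by positivity
  have hseq : Real.GammaSeq α k =
      (k : ℝ) ^ α * (Nat.factorial k) / ((∏ j ∈ Finset.range k, (α + j)) * (α + k)) := by
    rw [Real.GammaSeq, Finset.prod_range_succ]
  rw [hseq, gamma_add_nat' hα k]
  have hfac : (0 : ℝ) < (Nat.factorial k : ℝ) := by positivity
  have hrpow1 : (0 : ℝ) < (k : ℝ) ^ (α - 1) := Real.rpow_pos_of_pos hk0 _
  have hrpow2 : (0 : ℝ) < (k : ℝ) ^ α := Real.rpow_pos_of_pos hk0 _
  have hkα : (0 : ℝ) < α + k := by positivity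
  have key : (k : ℝ) ^ α = (k : ℝ) ^ (α - 1) * k := by
    rw [← Real.rpow_add_one hk0.ne' (α - 1)]; ring_nf
  field_simp
  rw [key]
  ring

/-- Gauss's formula with varying exponent: if `α_k ↓ α > 0` is non-increasing, positive, and
`(α_k - α) log k → 0`, then `Γ(α_k + k)/(k! k^(α_k - 1)) → 1`. -/
theorem gauss_formula_varying (α : ℝ) (a : ℕ → ℝ)
    (hα : 0 < α) (ha_pos : ∀ k, 0 < a k)
    (ha_anti : Antitone a) (ha_ge : ∀ k, α ≤ a k)
    (ha_lim : Tendsto a atTop (nhds α))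
    (ha_log : Tendsto (fun k : ℕ => (a k - α) * Real.log k) atTop (nhds 0)) :
    Tendsto (fun k : ℕ => Real.Gamma (a k + k) / (Nat.factorial k * (k : ℝ) ^ (a k - 1)))
      atTop (nhds 1) := by
  have hΓ : Real.Gamma α ≠ 0 := (Real.Gamma_pos_of_pos hα).ne'
  have hsub : Tendsto (fun k : ℕ => a k - α) atTop (nhds 0) := by
    simpa using ha_lim.sub (tendsto_const_nhds (x := α))
  -- Limit of Γ(a k)/Γ α
  have hcont : ContinuousAt Real.Gamma α := by
    refine (Real.differentiableAt_Gamma fun m => ?_).continuousAt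
    have : (0 : ℝ) ≤ m := by positivity
    intro h; rw [h] at hα; linarith
  have hA : Tendsto (fun k : ℕ => Real.Gamma (a k) / Real.Gamma α) atTop (nhds 1) := by
    have := (hcont.tendsto.comp ha_lim).div_const (Real.Gamma α)
    simpa [div_self hΓ] using this
  -- the product P k
  set P : ℕ → ℝ := fun k => ∏ s ∈ Finset.range k, ((a k + s) / (α + s)) with hP
  have hP_ge : ∀ k, 1 ≤ P k := by
    intro k
    have h : ∀ s ∈ Finset.range k, (1:ℝ) ≤ (a k + s) / (α + s) := by
      intro s _
      rw [le_div_iff₀ (by positivity)]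
      have := ha_ge k
      linarith
    calc (1:ℝ) = ∏ _s ∈ Finset.range k, (1:ℝ) := by simp
      _ ≤ ∏ s ∈ Finset.range k, ((a k + s) / (α + s)) :=
        Finset.prod_le_prod (fun s _ => zero_le_one) h
  -- S k bound
  have hS_bound : ∀ k : ℕ, (a k - α) * ∑ s ∈ Finset.range k, (α + (s : ℝ))⁻¹
      ≤ (min α 1)⁻¹ * ((a k - α) + (a k - α) * Real.log k) := by
    intro k
    have hd : (a k - α) ≥ 0 := by linarith [ha_ge k]
    have hmin : (0 : ℝ) < min α 1 := lt_min hα one_pos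
    have hsum : ∑ s ∈ Finset.range k, (α + (s : ℝ))⁻¹
        ≤ (min α 1)⁻¹ * (1 + Real.log k) := by
      have h1 : ∑ s ∈ Finset.range k, (α + (s : ℝ))⁻¹
          ≤ ∑ s ∈ Finset.range k, (min α 1)⁻¹ * ((s : ℝ) + 1)⁻¹ := by
        refine Finset.sum_le_sum fun s _ => ?_
        rw [← mul_inv, inv_le_inv₀ (by positivity) (by positivity)]
        rcases le_total α 1 with h | h
        · rw [min_eq_left h]
          have : α * s ≤ s := by nlinarith [Nat.cast_nonneg (α := ℝ) s]
          nlinarith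
        · rw [min_eq_right h]
          have : (0:ℝ) ≤ s := Nat.cast_nonneg s
          nlinarith
      have h2 : ∑ s ∈ Finset.range k, ((s : ℝ) + 1)⁻¹ = ((harmonic k : ℚ) : ℝ) := by
        rw [harmonic]
        push_cast
        rfl
      calc ∑ s ∈ Finset.range k, (α + (s : ℝ))⁻¹
          ≤ (min α 1)⁻¹ * ∑ s ∈ Finset.range k, ((s : ℝ) + 1)⁻¹ := by
            rw [Finset.mul_sum]; exact h1
        _ ≤ (min α 1)⁻¹ * (1 + Real.log k) := by
            rw [h2]
            exact mul_le_mul_of_nonneg_left (harmonic_le_one_add_log k) (by positivity)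
    calc (a k - α) * ∑ s ∈ Finset.range k, (α + (s : ℝ))⁻¹
        ≤ (a k - α) * ((min α 1)⁻¹ * (1 + Real.log k)) :=
          mul_le_mul_of_nonneg_left hsum hd
      _ = (min α 1)⁻¹ * ((a k - α) + (a k - α) * Real.log k) := by ring
  -- upper bound for P
  have hP_le : ∀ k, P k ≤ Real.exp ((a k - α) * ∑ s ∈ Finset.range k, (α + (s : ℝ))⁻¹) := by
    intro k
    have hd : (a k - α) ≥ 0 := by linarith [ha_ge k]
    rw [Finset.mul_sum, Real.exp_sum]
    refine Finset.prod_le_prod (fun s _ => div_nonneg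
      (add_nonneg (ha_pos k).le (Nat.cast_nonneg s)) (by positivity)) fun s _ => ?_
    have hs : (0 : ℝ) < α + s := by positivity
    rw [div_le_iff₀ hs]
    have h1 : (a k - α) / (α + s) + 1 ≤ Real.exp ((a k - α) * (α + (s:ℝ))⁻¹) := by
      have := Real.add_one_le_exp ((a k - α) * (α + (s:ℝ))⁻¹)
      rwa [div_eq_mul_inv]
    have h2 : a k + s = ((a k - α) / (α + s) + 1) * (α + s) := by
      field_simp
      ring
    rw [h2]
    exact mul_le_mul_of_nonneg_right h1 hs.le
  -- limit of the exponent bound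
  have hbound_lim : Tendsto
      (fun k : ℕ => (min α 1)⁻¹ * ((a k - α) + (a k - α) * Real.log k)) atTop (nhds 0) := by
    have := (hsub.add ha_log).const_mul ((min α 1)⁻¹)
    simpa using this
  have hPlim : Tendsto P atTop (nhds 1) := by
    have hup : Tendsto (fun k : ℕ => Real.exp ((min α 1)⁻¹ *
        ((a k - α) + (a k - α) * Real.log k))) atTop (nhds 1) := by
      simpa [Function.comp_def] using (Real.continuous_exp.continuousAt.tendsto.comp hbound_lim)
    refine tendsto_of_tendsto_of_tendsto_of_le_of_le tendsto_const_nhds hup hP_ge ?_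
    intro k
    exact (hP_le k).trans (Real.exp_le_exp.mpr (hS_bound k))
  -- limit of C k = k^(α - a k)
  have hC : Tendsto (fun k : ℕ => (k : ℝ) ^ (α - a k)) atTop (nhds 1) := by
    have h0 : Tendsto (fun k : ℕ => (α - a k) * Real.log k) atTop (nhds 0) := by
      have := ha_log.neg
      simp only [neg_zero] at this
      refine this.congr fun k => by ring
    have hexp : Tendsto (fun k : ℕ => Real.exp ((α - a k) * Real.log k)) atTop (nhds 1) := by
      simpa [Function.comp_def] using (Real.continuous_exp.continuousAt.tendsto.comp h0)
    refine hexp.congr' ?_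
    filter_upwards [eventually_ge_atTop 1] with k hk
    have hk0 : (0 : ℝ) < (k : ℝ) := by exact_mod_cast hk
    rw [Real.rpow_def_of_pos hk0, mul_comm]
  -- assemble
  have hB := gauss_classical hα
  have hmain : Tendsto (fun k : ℕ => (Real.Gamma (a k) / Real.Gamma α * P k) *
      (Real.Gamma (α + k) / (Nat.factorial k * (k : ℝ) ^ (α - 1))) * (k : ℝ) ^ (α - a k))
      atTop (nhds 1) := by
    have := ((hA.mul hPlim).mul hB).mul hC
    simpa using this
  refine hmain.congr' ?_
  filter_upwards [eventually_ge_atTop 1] with k hk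
  have hk0 : (0 : ℝ) < (k : ℝ) := by exact_mod_cast hk
  have hak : 0 < a k := ha_pos k
  rw [gamma_add_nat' hak k, gamma_add_nat' hα k]
  have hprodα : (0 : ℝ) < ∏ j ∈ Finset.range k, (α + j) :=
    Finset.prod_pos fun j _ => by positivity
  have hproda : (0 : ℝ) < ∏ j ∈ Finset.range k, (a k + j) :=
    Finset.prod_pos fun j _ => by positivity
  have hPdiv : P k = (∏ j ∈ Finset.range k, (a k + j)) / ∏ j ∈ Finset.range k, (α + j) :=
    Finset.prod_div_distrib _ _
  have hfac : (0 : ℝ) < (Nat.factorial k : ℝ) := by positivity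
  have hr1 : (0 : ℝ) < (k : ℝ) ^ (α - 1) := Real.rpow_pos_of_pos hk0 _
  have hr2 : (0 : ℝ) < (k : ℝ) ^ (a k - 1) := Real.rpow_pos_of_pos hk0 _
  have hr3 : (0 : ℝ) < (k : ℝ) ^ (α - a k) := Real.rpow_pos_of_pos hk0 _
  have hrpow : (k : ℝ) ^ (α - 1) = (k : ℝ) ^ (a k - 1) * (k : ℝ) ^ (α - a k) := by
    rw [← Real.rpow_add hk0]; ring_nf
  rw [hPdiv, hrpow]
  field_simp
end

section
/- Let X_N be the stationary distribution of the LBD process under model M_3, with birth rates b(k) = c_1(N−k) + c_3 k(N−k) and death rates d(k) = c_2 k + c_3 k(N−k) for 0 ≤ k ≤ N. Then X_N/N converges in distribution as N → ∞ to the Beta(a, b−a) distribution, where a = c_1/c_3 and b = (c_1+c_2)/c_3. -/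
open MeasureTheory Real Filter Finset

/-- The `Beta(a,c)` distribution on `(0,1)`, with density
`Γ(a+c)/(Γ(a)Γ(c)) x^(a-1) (1-x)^(c-1)`. -/
noncomputable def betaMeasure (a c : ℝ) : Measure ℝ :=
  (volume.restrict (Set.Ioo (0:ℝ) 1)).withDensity
    (fun x => ENNReal.ofReal
      (Real.Gamma (a + c) / (Real.Gamma a * Real.Gamma c) * x ^ (a - 1) * (1 - x) ^ (c - 1)))


noncomputable def ascR (x : ℝ) (n : ℕ) : ℝ := ∏ j ∈ Finset.range n, (x + j)

lemma ascR_zero (x : ℝ) : ascR x 0 = 1 := by simp [ascR]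

lemma ascR_succ (x : ℝ) (n : ℕ) : ascR x (n + 1) = ascR x n * (x + n) := by
  simp [ascR, Finset.prod_range_succ]

lemma ascR_pos {x : ℝ} (hx : 0 < x) (n : ℕ) : 0 < ascR x n := by
  refine Finset.prod_pos fun j _ => by positivity

lemma vandermondeR (a b : ℝ) : ∀ N : ℕ,
    ∑ k ∈ Finset.range (N + 1), (N.choose k : ℝ) * ascR a k * ascR b (N - k)
      = ascR (a + b) N := by
  intro N
  induction N with
  | zero => simp [ascR]
  | succ N ih =>
    rw [Finset.sum_range_succ' _ (N + 1)]
    have h1 : ∀ i ∈ Finset.range (N + 1),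
        ((N+1).choose (i+1) : ℝ) * ascR a (i+1) * ascR b (N + 1 - (i+1))
        = (N.choose i : ℝ) * (ascR a i * (a + i)) * ascR b (N - i)
          + (N.choose (i+1) : ℝ) * ascR a (i+1) * ascR b (N - i) := by
      intro i _
      have : N + 1 - (i + 1) = N - i := by omega
      rw [this, Nat.choose_succ_succ, ascR_succ]
      push_cast
      ring
    rw [Finset.sum_congr rfl h1, Finset.sum_add_distrib]
    have h2 : ∑ i ∈ Finset.range (N + 1), (N.choose (i+1) : ℝ) * ascR a (i+1) * ascR b (N - i)
        = ∑ i ∈ Finset.range N, (N.choose (i+1) : ℝ) * ascR a (i+1) * ascR b (N - i) := by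
      rw [Finset.sum_range_succ, Nat.choose_succ_self]
      simp
    have h3 : ∑ i ∈ Finset.range N, (N.choose (i+1) : ℝ) * ascR a (i+1) * ascR b (N - i)
        = (∑ j ∈ Finset.range (N + 1), (N.choose j : ℝ) * ascR a j * ascR b (N + 1 - j))
          - (N.choose 0 : ℝ) * ascR a 0 * ascR b (N + 1) := by
      rw [Finset.sum_range_succ' _ N]
      have : ∀ i ∈ Finset.range N, (N.choose (i+1) : ℝ) * ascR a (i+1) * ascR b (N + 1 - (i+1))
          = (N.choose (i+1) : ℝ) * ascR a (i+1) * ascR b (N - i) := by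
        intro i _
        congr 2
        omega
      rw [Finset.sum_congr rfl this]
      simp
    rw [h2, h3]
    have h4 : ∀ j ∈ Finset.range (N + 1),
        (N.choose j : ℝ) * ascR a j * ascR b (N + 1 - j)
        = (N.choose j : ℝ) * ascR a j * (ascR b (N - j) * (b + (N - j : ℕ))) := by
      intro j hj
      have hj' : j ≤ N := by simpa [Nat.lt_succ_iff] using hj
      have : N + 1 - j = (N - j) + 1 := by omega
      rw [this, ascR_succ]
    rw [Finset.sum_congr rfl h4]
    have key : ∑ i ∈ Finset.range (N + 1),
          ((N.choose i : ℝ) * (ascR a i * (a + i)) * ascR b (N - i)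
            + (N.choose i : ℝ) * ascR a i * (ascR b (N - i) * (b + (N - i : ℕ))))
        = (a + b + N) * ∑ i ∈ Finset.range (N + 1),
            (N.choose i : ℝ) * ascR a i * ascR b (N - i) := by
      rw [Finset.mul_sum]
      refine Finset.sum_congr rfl fun i hi => ?_
      have hi' : i ≤ N := by simpa [Nat.lt_succ_iff] using hi
      have : ((N - i : ℕ) : ℝ) = (N : ℝ) - i := by
        push_cast [Nat.cast_sub hi']; ring
      rw [this]
      ring
    rw [Finset.sum_add_distrib, ih] at key
    simp only [Nat.sub_zero, Nat.choose_zero_right, Nat.cast_one, ascR_zero, one_mul,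
      mul_one, ascR_succ]
    push_cast
    linarith [key]


lemma pmf_formula (c1 c2 c3 : ℝ) (hc1 : 0 < c1) (hc2 : 0 < c2) (hc3 : 0 < c3)
    (p : ℕ → ℕ → ℝ)
    (hsum : ∀ N : ℕ, ∑ k ∈ Finset.range (N + 1), p N k = 1)
    (hdb : ∀ N : ℕ, ∀ k < N,
      p N (k + 1) * (c2 * (k + 1) + c3 * (k + 1) * ((N : ℝ) - (k + 1))) =
        p N k * (c1 * ((N : ℝ) - k) + c3 * k * ((N : ℝ) - k))) :
    ∀ N k, k ≤ N → p N k * ascR (c1/c3 + c2/c3) N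
      = (N.choose k : ℝ) * ascR (c1/c3) k * ascR (c2/c3) (N - k) := by
  set a := c1/c3 with ha'
  set β := c2/c3 with hβ'
  have ha : 0 < a := by positivity
  have hβ : 0 < β := by positivity
  set w : ℕ → ℕ → ℝ := fun N k => (N.choose k : ℝ) * ascR a k * ascR β (N - k) with hw'
  have hw : ∀ N k, k < N →
      w N (k+1) * (((k:ℝ)+1) * (β + ((N:ℝ) - ((k:ℝ)+1))))
        = w N k * (((N:ℝ) - k) * (a + k)) := by
    intro N k hk
    have hchoose : (N.choose (k+1) : ℝ) * ((k:ℝ)+1) = (N.choose k : ℝ) * ((N:ℝ) - k) := by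
      have := Nat.choose_succ_right_eq N k
      have hcast : ((N - k : ℕ) : ℝ) = (N:ℝ) - k := by
        push_cast [Nat.cast_sub hk.le]; ring
      calc (N.choose (k+1) : ℝ) * ((k:ℝ)+1) = ((N.choose (k+1) * (k+1) : ℕ) : ℝ) := by push_cast; ring
        _ = ((N.choose k * (N - k) : ℕ) : ℝ) := by rw [this]
        _ = (N.choose k : ℝ) * ((N:ℝ) - k) := by push_cast [Nat.cast_sub hk.le]; ring
    have h1 : N - k = (N - (k+1)) + 1 := by omega
    have h2 : ((N - (k+1) : ℕ) : ℝ) = (N:ℝ) - ((k:ℝ)+1) := by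
      push_cast [Nat.cast_sub hk]; ring
    simp only [hw', ascR_succ, h1]
    rw [h2]
    push_cast
    linear_combination (ascR a k * (a+k) * ascR β (N-(k+1)) * (β + ((N:ℝ)-((k:ℝ)+1)))) * hchoose
  have hp : ∀ N k, k < N →
      p N (k+1) * (((k:ℝ)+1) * (β + ((N:ℝ) - ((k:ℝ)+1))))
        = p N k * (((N:ℝ) - k) * (a + k)) := by
    intro N k hk
    have := hdb N k hk
    have e1 : c2 * ((k:ℝ)+1) + c3 * ((k:ℝ)+1) * ((N : ℝ) - ((k:ℝ)+1))
        = c3 * (((k:ℝ)+1) * (β + ((N:ℝ) - ((k:ℝ)+1)))) := by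
      rw [hβ']
      field_simp
    have e2 : c1 * ((N : ℝ) - k) + c3 * k * ((N : ℝ) - k)
        = c3 * (((N:ℝ) - k) * (a + k)) := by
      rw [ha']
      field_simp
    push_cast at this
    rw [e1, e2] at this
    have hc3' : c3 ≠ 0 := hc3.ne'
    have h4 := mul_left_cancel₀ hc3' (by linarith [this] : c3 * (p N (k + 1) * (((k:ℝ)+1) * (β + ((N:ℝ) - ((k:ℝ)+1))))) = c3 * (p N k * (((N:ℝ) - k) * (a + k))))
    exact h4
  intro N
  have claim2 : ∀ k, k ≤ N → p N k * ascR β N = p N 0 * w N k := by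
    intro k
    induction k with
    | zero => intro _; simp [hw', ascR_zero]
    | succ k ih =>
      intro hk1
      have hk : k < N := by omega
      have ihh := ih hk.le
      have hD : (0:ℝ) < ((k:ℝ)+1) * (β + ((N:ℝ) - ((k:ℝ)+1))) := by
        have : ((k:ℝ)+1) ≤ (N:ℝ) := by exact_mod_cast hk1
        have h2 : (0:ℝ) < β + ((N:ℝ) - ((k:ℝ)+1)) := by linarith
        positivity
      have := hw N k hk
      have h3 := hp N k hk
      apply mul_right_cancel₀ hD.ne'
      calc p N (k+1) * ascR β N * (((k:ℝ)+1) * (β + ((N:ℝ) - ((k:ℝ)+1))))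
          = (p N (k+1) * (((k:ℝ)+1) * (β + ((N:ℝ) - ((k:ℝ)+1))))) * ascR β N := by ring
        _ = (p N k * (((N:ℝ) - k) * (a + k))) * ascR β N := by rw [h3]
        _ = (p N k * ascR β N) * (((N:ℝ) - k) * (a + k)) := by ring
        _ = (p N 0 * w N k) * (((N:ℝ) - k) * (a + k)) := by rw [ihh]
        _ = p N 0 * (w N k * (((N:ℝ) - k) * (a + k))) := by ring
        _ = p N 0 * (w N (k+1) * (((k:ℝ)+1) * (β + ((N:ℝ) - ((k:ℝ)+1))))) := by rw [this]
        _ = p N 0 * w N (k+1) * (((k:ℝ)+1) * (β + ((N:ℝ) - ((k:ℝ)+1)))) := by ring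
  have hp0 : p N 0 * ascR (a+β) N = ascR β N := by
    have h1 : ∑ k ∈ Finset.range (N+1), p N k * ascR β N = ascR β N := by
      rw [← Finset.sum_mul, hsum N, one_mul]
    have h2 : ∑ k ∈ Finset.range (N+1), p N k * ascR β N
        = p N 0 * ascR (a+β) N := by
      rw [Finset.sum_congr rfl fun k hk => claim2 k (by simpa [Nat.lt_succ_iff] using hk)]
      rw [← Finset.mul_sum, vandermondeR a β N]
    rw [← h2, h1]
  intro k hk
  have h4 := claim2 k hk
  have hbpos : (0:ℝ) < ascR β N := ascR_pos hβ N
  apply mul_right_cancel₀ hbpos.ne'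
  calc p N k * ascR (a+β) N * ascR β N
      = (p N k * ascR β N) * ascR (a+β) N := by ring
    _ = (p N 0 * w N k) * ascR (a+β) N := by rw [h4]
    _ = (p N 0 * ascR (a+β) N) * w N k := by ring
    _ = ascR β N * w N k := by rw [hp0]
    _ = (N.choose k : ℝ) * ascR a k * ascR β (N - k) * ascR β N := by rw [hw']; ring


lemma Gamma_ascR' (ascR : ℝ → ℕ → ℝ)
    (h0 : ∀ x, ascR x 0 = 1) (hs : ∀ x n, ascR x (n+1) = ascR x n * (x + n))
    {x : ℝ} (hx : 0 < x) (n : ℕ) :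
    Real.Gamma (x + n) = ascR x n * Real.Gamma x := by
  induction n with
  | zero => simp [h0]
  | succ n ih =>
    have hxn : x + (n:ℝ) ≠ 0 := by positivity
    have : x + ((n:ℕ)+1 : ℕ) = (x + n) + 1 := by push_cast; ring
    rw [this, Real.Gamma_add_one hxn, ih, hs]
    ring

-- real Beta integral over Ioo
lemma betaIntegrand_eq {s t : ℝ} :
    ∀ x ∈ Set.Icc (0:ℝ) 1,
      ((x:ℂ) ^ ((s:ℂ) - 1) * (1 - (x:ℂ)) ^ ((t:ℂ) - 1)) =
        ((x ^ (s-1) * (1-x) ^ (t-1) : ℝ) : ℂ) := by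
  intro x hx
  have h1 : (0:ℝ) ≤ x := hx.1
  have h2 : (0:ℝ) ≤ 1 - x := by linarith [hx.2]
  rw [show ((s:ℂ) - 1) = ((s - 1 : ℝ) : ℂ) by push_cast; ring,
      show ((t:ℂ) - 1) = ((t - 1 : ℝ) : ℂ) by push_cast; ring,
      show (1 - (x:ℂ)) = ((1 - x : ℝ) : ℂ) by push_cast; ring,
      ← Complex.ofReal_cpow h1, ← Complex.ofReal_cpow h2]
  push_cast
  ring

lemma betaIntegrableOn {s t : ℝ} (hs : 0 < s) (ht : 0 < t) :
    IntegrableOn (fun x : ℝ => x ^ (s-1) * (1-x) ^ (t-1)) (Set.Ioo 0 1) volume := by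
  have h := Complex.betaIntegral_convergent (u := s) (v := t) (by simpa) (by simpa)
  have h2 : IntegrableOn (fun x : ℝ => (x:ℂ) ^ ((s:ℂ) - 1) * (1 - (x:ℂ)) ^ ((t:ℂ) - 1))
      (Set.Ioo 0 1) volume := by
    have := (intervalIntegrable_iff_integrableOn_Ioc_of_le (by norm_num : (0:ℝ) ≤ 1)).mp h
    exact this.mono_set Set.Ioo_subset_Ioc_self
  have h3 : IntegrableOn (fun x : ℝ => ((x ^ (s-1) * (1-x) ^ (t-1) : ℝ) : ℂ))
      (Set.Ioo 0 1) volume :=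
    h2.congr_fun (fun x hx => betaIntegrand_eq x ⟨hx.1.le, hx.2.le⟩) measurableSet_Ioo
  exact (Complex.reCLM.integrable_comp h3).congr <| by
    refine (ae_restrict_of_forall_mem measurableSet_Ioo fun x hx => ?_)
    simp
lemma betaIntegral_real {s t : ℝ} (hs : 0 < s) (ht : 0 < t) :
    ∫ x in Set.Ioo (0:ℝ) 1, x ^ (s-1) * (1-x) ^ (t-1)
      = Real.Gamma s * Real.Gamma t / Real.Gamma (s + t) := by
  have hG : Real.Gamma (s + t) ≠ 0 := (Real.Gamma_pos_of_pos (by linarith)).ne'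
  have key : Complex.Gamma s * Complex.Gamma t
      = Complex.Gamma (s + t) * Complex.betaIntegral s t :=
    Complex.Gamma_mul_Gamma_eq_betaIntegral (by simpa) (by simpa)
  have hbeta : Complex.betaIntegral s t
      = ((∫ x in Set.Ioo (0:ℝ) 1, x ^ (s-1) * (1-x) ^ (t-1) : ℝ) : ℂ) := by
    rw [Complex.betaIntegral, intervalIntegral.integral_of_le (by norm_num : (0:ℝ) ≤ 1)]
    rw [show (∫ x in Set.Ioc (0:ℝ) 1, (x:ℂ) ^ ((s:ℂ) - 1) * (1 - (x:ℂ)) ^ ((t:ℂ) - 1))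
        = ∫ x in Set.Ioc (0:ℝ) 1, ((x ^ (s-1) * (1-x) ^ (t-1) : ℝ) : ℂ) from
      MeasureTheory.setIntegral_congr_fun measurableSet_Ioc fun x hx =>
        betaIntegrand_eq x ⟨hx.1.le, hx.2⟩]
    rw [MeasureTheory.integral_Ioc_eq_integral_Ioo]
    simpa using Complex.ofRealCLM.integral_comp_comm (betaIntegrableOn hs ht)
  rw [hbeta] at key
  have : ((Real.Gamma s * Real.Gamma t : ℝ) : ℂ)
      = ((Real.Gamma (s+t) * ∫ x in Set.Ioo (0:ℝ) 1, x ^ (s-1) * (1-x) ^ (t-1) : ℝ) : ℂ) := by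
    push_cast
    rw [← Complex.Gamma_ofReal, ← Complex.Gamma_ofReal, ← Complex.Gamma_ofReal] at *
    push_cast at key ⊢
    rw [key]
    try ring
  have := Complex.ofReal_injective this
  field_simp
  linarith [this]


lemma Gamma_ascR {x : ℝ} (hx : 0 < x) (n : ℕ) :
    Real.Gamma (x + n) = ascR x n * Real.Gamma x :=
  Gamma_ascR' ascR ascR_zero ascR_succ hx n

noncomputable def betaDen (a b : ℝ) (x : ℝ) : ℝ :=
  Real.Gamma (a + b) / (Real.Gamma a * Real.Gamma b) * x ^ (a - 1) * (1 - x) ^ (b - 1)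

noncomputable def bernTerm (n k : ℕ) (x : ℝ) : ℝ := (n.choose k : ℝ) * x ^ k * (1 - x) ^ (n - k)

lemma betaDen_nonneg {a b : ℝ} (ha : 0 < a) (hb : 0 < b) {x : ℝ} (hx : x ∈ Set.Ioo (0:ℝ) 1) :
    0 ≤ betaDen a b x := by
  have h1 : (0:ℝ) < Real.Gamma (a + b) := Real.Gamma_pos_of_pos (by linarith)
  have h2 : (0:ℝ) < Real.Gamma a := Real.Gamma_pos_of_pos ha
  have h3 : (0:ℝ) < Real.Gamma b := Real.Gamma_pos_of_pos hb
  have h4 : (0:ℝ) ≤ x ^ (a-1) := Real.rpow_nonneg hx.1.le _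
  have h5 : (0:ℝ) ≤ (1-x) ^ (b-1) := Real.rpow_nonneg (by linarith [hx.2]) _
  unfold betaDen
  positivity

lemma betaDen_measurable (a b : ℝ) : Measurable (betaDen a b) := by
  unfold betaDen
  exact ((measurable_const.mul (measurable_id.pow_const _)).mul
    ((measurable_const.sub measurable_id).pow_const _))

lemma beta_bern_eqOn (a b : ℝ) (n j : ℕ) :
    ∀ x ∈ Set.Ioo (0:ℝ) 1,
      betaDen a b x * bernTerm n j x
        = (Real.Gamma (a + b) / (Real.Gamma a * Real.Gamma b) * (n.choose j : ℝ))
            * (x ^ ((a + j) - 1) * (1 - x) ^ ((b + ((n - j : ℕ) : ℝ)) - 1)) := by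
  intro x hx
  have hx0 : (0:ℝ) < x := hx.1
  have hx1 : (0:ℝ) < 1 - x := by linarith [hx.2]
  have e1 : x ^ ((a + (j:ℝ)) - 1) = x ^ (a - 1) * x ^ (j:ℕ) := by
    rw [← Real.rpow_natCast x j, ← Real.rpow_add hx0]
    congr 1
    ring
  have e2 : (1-x) ^ ((b + ((n - j : ℕ):ℝ)) - 1) = (1-x) ^ (b - 1) * (1-x) ^ (n - j : ℕ) := by
    rw [← Real.rpow_natCast (1-x) (n - j), ← Real.rpow_add hx1]
    congr 1
    ring
  rw [e1, e2]
  unfold betaDen bernTerm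
  ring

lemma beta_bern_integrableOn {a b : ℝ} (ha : 0 < a) (hb : 0 < b) (n j : ℕ) :
    IntegrableOn (fun x : ℝ => betaDen a b x * bernTerm n j x) (Set.Ioo 0 1) volume := by
  have haj : (0:ℝ) < a + j := by positivity
  have hbj : (0:ℝ) < b + ((n - j : ℕ) : ℝ) := by positivity
  have base := (betaIntegrableOn haj hbj).const_mul
    (Real.Gamma (a + b) / (Real.Gamma a * Real.Gamma b) * (n.choose j : ℝ))
  exact MeasureTheory.IntegrableOn.congr_fun base (fun x hx => (beta_bern_eqOn a b n j x hx).symm) measurableSet_Ioo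

lemma beta_bern_integral {a b : ℝ} (ha : 0 < a) (hb : 0 < b) {n j : ℕ} (hj : j ≤ n) :
    ∫ x in Set.Ioo (0:ℝ) 1, betaDen a b x * bernTerm n j x
      = (n.choose j : ℝ) * ascR a j * ascR b (n - j) / ascR (a + b) n := by
  have haj : (0:ℝ) < a + j := by positivity
  have hbj : (0:ℝ) < b + ((n - j : ℕ) : ℝ) := by positivity
  rw [MeasureTheory.setIntegral_congr_fun measurableSet_Ioo (beta_bern_eqOn a b n j)]
  rw [MeasureTheory.integral_const_mul, betaIntegral_real haj hbj]
  have g3 : (a + (j:ℝ)) + (b + ((n - j : ℕ):ℝ)) = (a + b) + (n:ℕ) := by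
    push_cast [Nat.cast_sub hj]
    ring
  rw [g3]
  rw [Gamma_ascR ha j, Gamma_ascR hb (n - j), Gamma_ascR (by positivity : (0:ℝ) < a + b) n]
  have p1 : Real.Gamma a ≠ 0 := (Real.Gamma_pos_of_pos ha).ne'
  have p2 : Real.Gamma b ≠ 0 := (Real.Gamma_pos_of_pos hb).ne'
  have p3 : Real.Gamma (a + b) ≠ 0 := (Real.Gamma_pos_of_pos (by positivity)).ne'
  have p4 : ascR (a + b) n ≠ 0 := (ascR_pos (by positivity) n).ne'
  field_simp

lemma betaDen_integrableOn {a b : ℝ} (ha : 0 < a) (hb : 0 < b) :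
    IntegrableOn (betaDen a b) (Set.Ioo 0 1) volume := by
  have base := (betaIntegrableOn ha hb).const_mul
    (Real.Gamma (a + b) / (Real.Gamma a * Real.Gamma b))
  exact MeasureTheory.IntegrableOn.congr_fun base (fun x hx => by unfold betaDen; ring) measurableSet_Ioo

lemma betaDen_integral_eq_one {a b : ℝ} (ha : 0 < a) (hb : 0 < b) :
    ∫ x in Set.Ioo (0:ℝ) 1, betaDen a b x = 1 := by
  have : ∀ x ∈ Set.Ioo (0:ℝ) 1, betaDen a b x
      = (Real.Gamma (a + b) / (Real.Gamma a * Real.Gamma b)) * (x ^ (a-1) * (1-x) ^ (b-1)) := by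
    intro x _
    unfold betaDen
    ring
  rw [MeasureTheory.setIntegral_congr_fun measurableSet_Ioo this,
    MeasureTheory.integral_const_mul, betaIntegral_real ha hb]
  have p1 : Real.Gamma a ≠ 0 := (Real.Gamma_pos_of_pos ha).ne'
  have p2 : Real.Gamma b ≠ 0 := (Real.Gamma_pos_of_pos hb).ne'
  have p3 : Real.Gamma (a + b) ≠ 0 := (Real.Gamma_pos_of_pos (by positivity)).ne'
  field_simp

lemma betaMeasure_integral (a b : ℝ) (ha : 0 < a) (hb : 0 < b) (g : ℝ → ℝ) :
    ∫ x, g x ∂(betaMeasure a b) = ∫ x in Set.Ioo (0:ℝ) 1, (betaDen a b x).toNNReal • g x := by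
  rw [show betaMeasure a b = (volume.restrict (Set.Ioo (0:ℝ) 1)).withDensity
      (fun x => (((betaDen a b x).toNNReal : NNReal) : ENNReal)) from rfl]
  exact integral_withDensity_eq_integral_smul ((betaDen_measurable a b).real_toNNReal) g

lemma betaMeasure_integral' (a b : ℝ) (ha : 0 < a) (hb : 0 < b) (g : ℝ → ℝ) :
    ∫ x, g x ∂(betaMeasure a b) = ∫ x in Set.Ioo (0:ℝ) 1, betaDen a b x * g x := by
  rw [betaMeasure_integral a b ha hb g]
  refine MeasureTheory.setIntegral_congr_fun measurableSet_Ioo fun x hx => ?_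
  have h := betaDen_nonneg ha hb hx
  simp [NNReal.smul_def, Real.coe_toNNReal _ h]

open unitInterval in
theorem beta_tendsto (a b : ℝ) (ha : 0 < a) (hb : 0 < b) (q : ℕ → ℕ → ℝ)
    (hq : ∀ N k, k ≤ N → q N k * ascR (a + b) N
      = (N.choose k : ℝ) * ascR a k * ascR b (N - k))
    (f : BoundedContinuousFunction ℝ ℝ) :
    Tendsto (fun N : ℕ => ∑ k ∈ Finset.range (N + 1), q N k * f ((k : ℝ) / N))
      atTop (nhds (∫ x, f x ∂(betaMeasure a b))) := by
  have hZ : ∀ N : ℕ, (0:ℝ) < ascR (a + b) N := fun N => ascR_pos (by positivity) N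
  set fI : C(I, ℝ) := ⟨fun x => f x, f.continuous.comp continuous_subtype_val⟩ with hfI
  -- Bernstein approximation evaluated
  have hBval : ∀ (N : ℕ) (x : I), (bernsteinApproximation N fI) x
      = ∑ k ∈ Finset.range (N + 1), f ((k : ℝ) / N) * bernTerm N k (x : ℝ) := by
    intro N x
    rw [bernsteinApproximation.apply]
    rw [show (∑ k : Fin (N+1), bernstein N k x • fI (bernstein.z k))
        = ∑ k : Fin (N+1), f (((k:ℕ) : ℝ) / N) * bernTerm N (k:ℕ) (x:ℝ) from
      Finset.sum_congr rfl fun k _ => by rw [smul_eq_mul, mul_comm, bernstein_apply]; rfl]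
    exact Fin.sum_univ_eq_sum_range (fun k => f ((k : ℝ) / N) * bernTerm N k (x:ℝ)) (N+1)
  -- the key identity : the weighted sum is the integral of the Bernstein polynomial
  have key : ∀ N : ℕ, ∑ k ∈ Finset.range (N + 1), q N k * f ((k : ℝ) / N)
      = ∫ x in Set.Ioo (0:ℝ) 1, betaDen a b x
          * ∑ k ∈ Finset.range (N + 1), f ((k : ℝ) / N) * bernTerm N k x := by
    intro N
    have expand : ∀ x ∈ Set.Ioo (0:ℝ) 1, betaDen a b x
        * ∑ k ∈ Finset.range (N + 1), f ((k : ℝ) / N) * bernTerm N k x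
        = ∑ k ∈ Finset.range (N + 1), f ((k : ℝ) / N) * (betaDen a b x * bernTerm N k x) := by
      intro x _
      rw [Finset.mul_sum]
      exact Finset.sum_congr rfl fun k _ => by ring
    rw [MeasureTheory.setIntegral_congr_fun measurableSet_Ioo expand]
    rw [MeasureTheory.integral_finset_sum _
      (fun k _ => ((beta_bern_integrableOn ha hb N k).const_mul _))]
    refine Finset.sum_congr rfl fun k hk => ?_
    have hk' : k ≤ N := by simpa [Nat.lt_succ_iff] using hk
    rw [MeasureTheory.integral_const_mul, beta_bern_integral ha hb hk']
    have hqv : q N k = (N.choose k : ℝ) * ascR a k * ascR b (N - k) / ascR (a + b) N := by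
      rw [eq_div_iff (hZ N).ne']
      exact hq N k hk'
    rw [hqv]
    ring
  -- bound by the sup norm distance of Bernstein approximation
  have hbound : ∀ N : ℕ,
      |(∑ k ∈ Finset.range (N + 1), q N k * f ((k : ℝ) / N)) - ∫ x, f x ∂(betaMeasure a b)|
        ≤ ‖bernsteinApproximation N fI - fI‖ := by
    intro N
    have hintB : IntegrableOn (fun x => betaDen a b x
        * ∑ k ∈ Finset.range (N + 1), f ((k : ℝ) / N) * bernTerm N k x) (Set.Ioo 0 1) volume := by
      have hsum : IntegrableOn (fun x => ∑ k ∈ Finset.range (N + 1),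
          f ((k : ℝ) / N) * (betaDen a b x * bernTerm N k x)) (Set.Ioo 0 1) volume :=
        MeasureTheory.integrable_finset_sum _
          (fun k _ => ((beta_bern_integrableOn ha hb N k).const_mul _))
      refine hsum.congr_fun (fun x hx => ?_) measurableSet_Ioo
      rw [Finset.mul_sum]
      exact Finset.sum_congr rfl fun k _ => by ring
    have hintf : IntegrableOn (fun x => betaDen a b x * f x) (Set.Ioo 0 1) volume := by
      have h1 : Integrable (fun x => (f x) * betaDen a b x)
          (volume.restrict (Set.Ioo (0:ℝ) 1)) :=
        MeasureTheory.Integrable.bdd_mul (betaDen_integrableOn ha hb)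
          (f.continuous.aestronglyMeasurable)
          (c := ‖f‖) (Eventually.of_forall fun x => f.norm_coe_le_norm x)
      exact h1.congr (Eventually.of_forall fun x => mul_comm _ _)
    rw [key N, betaMeasure_integral' a b ha hb f]
    rw [← MeasureTheory.integral_sub hintB hintf]
    rw [← Real.norm_eq_abs]
    have hle := MeasureTheory.norm_integral_le_of_norm_le
      (f := fun x => betaDen a b x
          * (∑ k ∈ Finset.range (N + 1), f ((k : ℝ) / N) * bernTerm N k x)
        - betaDen a b x * f x)
      (g := fun x => ‖bernsteinApproximation N fI - fI‖ * betaDen a b x)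
      (μ := volume.restrict (Set.Ioo (0:ℝ) 1))
      ((betaDen_integrableOn ha hb).const_mul _)
      (by
        refine (ae_restrict_iff' measurableSet_Ioo).mpr (Eventually.of_forall fun x hx => ?_)
        have hx01 : x ∈ Set.Icc (0:ℝ) 1 := ⟨hx.1.le, hx.2.le⟩
        have hDnn := betaDen_nonneg ha hb hx
        have hval : (∑ k ∈ Finset.range (N + 1), f ((k : ℝ) / N) * bernTerm N k x) - f x
            = (bernsteinApproximation N fI - fI) (⟨x, hx01⟩ : I) := by
          rw [ContinuousMap.sub_apply, hBval N ⟨x, hx01⟩]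
          rfl
        calc ‖betaDen a b x * (∑ k ∈ Finset.range (N + 1), f ((k : ℝ) / N) * bernTerm N k x)
              - betaDen a b x * f x‖
            = betaDen a b x * ‖(∑ k ∈ Finset.range (N + 1), f ((k : ℝ) / N) * bernTerm N k x)
              - f x‖ := by
              rw [← mul_sub, Real.norm_eq_abs, Real.norm_eq_abs, abs_mul, abs_of_nonneg hDnn]
          _ ≤ betaDen a b x * ‖bernsteinApproximation N fI - fI‖ := by
              apply mul_le_mul_of_nonneg_left _ hDnn
              rw [hval]
              exact ContinuousMap.norm_coe_le_norm _ _
          _ = ‖bernsteinApproximation N fI - fI‖ * betaDen a b x := mul_comm _ _)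
    calc ‖∫ x in Set.Ioo (0:ℝ) 1, (betaDen a b x
          * (∑ k ∈ Finset.range (N + 1), f ((k : ℝ) / N) * bernTerm N k x)
          - betaDen a b x * f x)‖
        ≤ ∫ x in Set.Ioo (0:ℝ) 1, ‖bernsteinApproximation N fI - fI‖ * betaDen a b x := hle
      _ = ‖bernsteinApproximation N fI - fI‖ * ∫ x in Set.Ioo (0:ℝ) 1, betaDen a b x := by
          rw [MeasureTheory.integral_const_mul]
      _ = ‖bernsteinApproximation N fI - fI‖ := by
          rw [betaDen_integral_eq_one ha hb, mul_one]
  -- conclude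
  have hε : Tendsto (fun N : ℕ => ‖bernsteinApproximation N fI - fI‖) atTop (nhds 0) := by
    have h := bernsteinApproximation_uniform fI
    rwa [tendsto_iff_norm_sub_tendsto_zero] at h
  rw [tendsto_iff_norm_sub_tendsto_zero]
  have habs : Tendsto (fun N : ℕ =>
      |(∑ k ∈ Finset.range (N + 1), q N k * f ((k : ℝ) / N)) - ∫ x, f x ∂(betaMeasure a b)|)
      atTop (nhds 0) :=
    squeeze_zero (fun _ => abs_nonneg _) hbound hε
  simpa [Real.norm_eq_abs] using habs

/-- For the `M₃` LBD process (birth rates `b(k) = c₁(N-k) + c₃k(N-k)`, death rates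
`d(k) = c₂k + c₃k(N-k)`), the normalized stationary state `X_N/N` converges in
distribution to `Beta(a, b-a)` where `a = c₁/c₃`, `b = (c₁+c₂)/c₃`. -/
theorem m3_tendsto_beta (c1 c2 c3 : ℝ) (hc1 : 0 < c1) (hc2 : 0 < c2) (hc3 : 0 < c3)
    (p : ℕ → ℕ → ℝ)
    (hnn : ∀ N k, 0 ≤ p N k)
    (hsum : ∀ N : ℕ, ∑ k ∈ Finset.range (N + 1), p N k = 1)
    (hdb : ∀ N : ℕ, ∀ k < N,
      p N (k + 1) * (c2 * (k + 1) + c3 * (k + 1) * ((N : ℝ) - (k + 1))) =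
        p N k * (c1 * ((N : ℝ) - k) + c3 * k * ((N : ℝ) - k))) :
    ∀ f : BoundedContinuousFunction ℝ ℝ,
      Tendsto (fun N : ℕ => ∑ k ∈ Finset.range (N + 1), p N k * f ((k : ℝ) / N))
        atTop
        (nhds (∫ x, f x ∂(betaMeasure (c1 / c3) ((c1 + c2) / c3 - c1 / c3)))) := by
  intro f
  have hβeq : (c1 + c2) / c3 - c1 / c3 = c2 / c3 := by
    rw [add_div]
    ring
  rw [hβeq]
  have ha : 0 < c1 / c3 := by positivity
  have hb : 0 < c2 / c3 := by positivity
  exact beta_tendsto (c1/c3) (c2/c3) ha hb p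
    (pmf_formula c1 c2 c3 hc1 hc2 hc3 p hsum hdb) f
end

section
/- Under model M_3 with b(k) = c_1(N−k) + c_3 k(N−k) and d(k) = c_2 k + c_3 k(N−k), the stationary distribution is explicitly p(k) ∝ C(N,k) ∏_{s=0}^{k-1} (c_1 + c_3 s)/(c_2 + c_3(N−s−1)), i.e. p(k) ∝ C(N,k) · Γ(a+k)/Γ(a) · Γ(b−a+N−k)/Γ(b−a+N) · Γ(b−a+N)/(Γ(b−a)) with a = c_1/c_3, b−a = c_2/c_3; this is a beta-binomial-type distribution on {0,…,N}. -/
open Real Finset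

/-- For the `M₃` LBD process (birth rates `b(k) = c₁(N-k) + c₃k(N-k)`, death rates
`d(k) = c₂k + c₃k(N-k)`), the stationary distribution (satisfying detailed balance) is
explicitly a beta-binomial-type law:
`p(k) = p(0) C(N,k) ∏_{s=0}^{k-1} (c₁+c₃s)/(c₂+c₃(N-s-1))`, i.e.
`p(k) = p(0) C(N,k) (Γ(a+k)/Γ(a)) (Γ(b-a+N-k)/Γ(b-a+N))` with `a = c₁/c₃`,
`b-a = c₂/c₃`. -/
theorem m3_stationary_formula (c1 c2 c3 : ℝ) (hc1 : 0 < c1) (hc2 : 0 < c2) (hc3 : 0 < c3)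
    (N : ℕ) (p : ℕ → ℝ)
    (hdb : ∀ k < N,
      p (k + 1) * (c2 * (k + 1) + c3 * (k + 1) * ((N : ℝ) - (k + 1))) =
        p k * (c1 * ((N : ℝ) - k) + c3 * k * ((N : ℝ) - k))) :
    ∀ k ≤ N,
      p k = p 0 * (N.choose k : ℝ) *
          ∏ s ∈ Finset.range k, (c1 + c3 * s) / (c2 + c3 * ((N : ℝ) - s - 1)) ∧
      p k = p 0 * (N.choose k : ℝ) *
          (Real.Gamma (c1 / c3 + k) / Real.Gamma (c1 / c3)) *
          (Real.Gamma (c2 / c3 + N - k) / Real.Gamma (c2 / c3 + N)) := by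
  -- product identity
  have key : ∀ k ≤ N, p k = p 0 * (N.choose k : ℝ) *
      ∏ s ∈ Finset.range k, (c1 + c3 * s) / (c2 + c3 * ((N : ℝ) - s - 1)) := by
    intro k hk
    induction k with
    | zero => simp
    | succ n ih =>
      have hn : n < N := hk
      have ihn := ih hn.le
      have hcast : ((n : ℝ) + 1) ≤ (N : ℝ) := by exact_mod_cast hk
      have hden2 : (0:ℝ) < c2 + c3 * ((N:ℝ) - n - 1) := by nlinarith
      have hd : (0:ℝ) < c2 * ((n:ℝ)+1) + c3 * ((n:ℝ)+1) * ((N:ℝ) - ((n:ℝ)+1)) := by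
        nlinarith
      have hdbn := hdb n hn
      push_cast at hdbn
      have hchoose : (N.choose (n+1) : ℝ) * ((n:ℝ)+1) = (N.choose n : ℝ) * ((N:ℝ) - n) := by
        have h2 := Nat.choose_succ_right_eq N n
        have hsub : ((N - n : ℕ) : ℝ) = (N:ℝ) - n := by
          rw [Nat.cast_sub hn.le]
        calc (N.choose (n+1) : ℝ) * ((n:ℝ)+1)
            = ((N.choose (n+1) * (n+1) : ℕ) : ℝ) := by push_cast; ring
          _ = ((N.choose n * (N - n) : ℕ) : ℝ) := by rw [h2]
          _ = (N.choose n : ℝ) * ((N:ℝ) - n) := by push_cast [hsub]; ring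
      apply mul_right_cancel₀ (ne_of_gt hd)
      rw [hdbn, ihn, Finset.prod_range_succ]
      have hB : (c2 + c3 * ((N:ℝ) - n - 1)) ≠ 0 := ne_of_gt hden2
      calc p 0 * ↑(N.choose n) * (∏ s ∈ Finset.range n, (c1 + c3 * s) / (c2 + c3 * ((N:ℝ) - s - 1)))
            * (c1 * ((N:ℝ) - n) + c3 * n * ((N:ℝ) - n))
          = (↑(N.choose n) * ((N:ℝ) - n)) *
            (p 0 * (∏ s ∈ Finset.range n, (c1 + c3 * s) / (c2 + c3 * ((N:ℝ) - s - 1)))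
              * (c1 + c3 * n)) := by ring
        _ = (↑(N.choose (n+1)) * ((n:ℝ)+1)) *
            (p 0 * (∏ s ∈ Finset.range n, (c1 + c3 * s) / (c2 + c3 * ((N:ℝ) - s - 1)))
              * (c1 + c3 * n)) := by rw [hchoose]
        _ = p 0 * ↑(N.choose (n+1)) *
            ((∏ s ∈ Finset.range n, (c1 + c3 * s) / (c2 + c3 * ((N:ℝ) - s - 1)))
              * ((c1 + c3 * n) / (c2 + c3 * ((N:ℝ) - n - 1)))) *
            (c2 * ((n:ℝ)+1) + c3 * ((n:ℝ)+1) * ((N:ℝ) - ((n:ℝ)+1))) := by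
            have hdd : c2 * ((n:ℝ)+1) + c3 * ((n:ℝ)+1) * ((N:ℝ) - ((n:ℝ)+1))
                = ((n:ℝ)+1) * (c2 + c3 * ((N:ℝ) - n - 1)) := by ring
            rw [hdd]
            have hcancel : (c1 + c3 * (n:ℝ)) / (c2 + c3 * ((N:ℝ) - n - 1)) *
                (c2 + c3 * ((N:ℝ) - n - 1)) = c1 + c3 * (n:ℝ) := div_mul_cancel₀ _ hB
            linear_combination (-(p 0 * (N.choose (n+1) : ℝ) * ((n:ℝ)+1)) *
              ∏ s ∈ Finset.range n, (c1 + c3 * s) / (c2 + c3 * ((N:ℝ) - s - 1))) * hcancel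
  intro k hk
  refine ⟨key k hk, ?_⟩
  have gamma_eq : ∀ k ≤ N, (∏ s ∈ Finset.range k, (c1 + c3 * s) / (c2 + c3 * ((N : ℝ) - s - 1))) =
      (Real.Gamma (c1 / c3 + k) / Real.Gamma (c1 / c3)) *
      (Real.Gamma (c2 / c3 + N - k) / Real.Gamma (c2 / c3 + N)) := by
    intro k hk
    induction k with
    | zero =>
      simp only [Finset.range_zero, Finset.prod_empty, Nat.cast_zero, add_zero, sub_zero]
      rw [div_self (ne_of_gt (Real.Gamma_pos_of_pos (by positivity))),
          div_self (ne_of_gt (Real.Gamma_pos_of_pos (by positivity))), mul_one]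
    | succ n ih =>
      have hn : n < N := hk
      have hcast : ((n : ℝ) + 1) ≤ (N : ℝ) := by exact_mod_cast hk
      have ha : (0:ℝ) < c1 / c3 + n := by positivity
      have hb : (0:ℝ) < c2 / c3 + N - n - 1 := by
        have h0 : (0:ℝ) < c2 / c3 := by positivity
        linarith
      rw [Finset.prod_range_succ, ih hn.le]
      have hGa : Real.Gamma (c1 / c3 + ((n:ℕ)+1 : ℕ)) = (c1 / c3 + n) * Real.Gamma (c1 / c3 + n) := by
        have h := Real.Gamma_add_one (ne_of_gt ha)
        have e : Real.Gamma (c1 / c3 + ((n:ℕ)+1 : ℕ)) = Real.Gamma ((c1 / c3 + n) + 1) := by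
          congr 1; push_cast; ring
        rw [e, h]
      have hGb : Real.Gamma (c2 / c3 + (N:ℝ) - n) =
          (c2 / c3 + (N:ℝ) - n - 1) * Real.Gamma (c2 / c3 + (N:ℝ) - n - 1) := by
        have h := Real.Gamma_add_one (ne_of_gt hb)
        have e : Real.Gamma (c2 / c3 + (N:ℝ) - n) = Real.Gamma ((c2 / c3 + (N:ℝ) - n - 1) + 1) := by
          congr 1; ring
        rw [e, h]
      have hGb' : Real.Gamma (c2 / c3 + (N:ℝ) - ((n:ℕ)+1 : ℕ)) =
          Real.Gamma (c2 / c3 + (N:ℝ) - n - 1) := by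
        congr 1; push_cast; ring
      have hfrac : (c1 + c3 * n) / (c2 + c3 * ((N:ℝ) - n - 1)) =
          (c1 / c3 + n) / (c2 / c3 + (N:ℝ) - n - 1) := by
        rw [div_eq_div_iff (by nlinarith) (ne_of_gt hb)]
        field_simp
        ring
      rw [hGa, hGb', hfrac, hGb]
      have hGaPos : (0:ℝ) < Real.Gamma (c1 / c3) := Real.Gamma_pos_of_pos (by positivity)
      have hGbPos : (0:ℝ) < Real.Gamma (c2 / c3 + N) := Real.Gamma_pos_of_pos (by positivity)
      generalize Real.Gamma (c1 / c3 + n) = G1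
      generalize hg0 : Real.Gamma (c1 / c3) = G0 at hGaPos ⊢
      generalize Real.Gamma (c2 / c3 + (N:ℝ) - n - 1) = G2
      generalize hg3 : Real.Gamma (c2 / c3 + (N:ℝ)) = G3 at hGbPos ⊢
      set x := c2 / c3 + (N:ℝ) - n - 1 with hx
      field_simp
  rw [key k hk, gamma_eq k hk]
  ring
end
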